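/- arXiv:math/0509518 — 3 statements merged into one kernel-verified Lean document; each statement's English description precedes it below -/
import Mathlib

section
/- Every complete, locally compact rooted real tree (T,d,ρ) admits an isometric embedding f : T → ℓ¹(ℕ) with f(ρ) = 0; in particular, every pointed isometry class of complete locally compact rooted real trees has a representative in 𝕋_{ℓ¹}. -/
/-- The property of `f` being the (unique) isometric arc-parametrisation joining `s` to `t`
in a metric space. -/
def arcProp {T : Type*} [MetricSpace T] (s t : T)
    (f : Set.Icc (0 : ℝ) (dist s t) → T) : Prop :=
  Isometry f ∧ f ⟨0, Set.left_mem_Icc.2 dist_nonneg⟩ = s ∧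
    f ⟨dist s t, Set.right_mem_Icc.2 dist_nonneg⟩ = t

/-- A metric space is a real tree if any two points are joined by a unique isometric arc,
and every continuous injective path has as image the corresponding arc. -/
def IsRealTree (T : Type*) [MetricSpace T] : Prop :=
  (∀ s t : T, ∃! f : Set.Icc (0 : ℝ) (dist s t) → T, arcProp s t f) ∧
  (∀ q : Set.Icc (0 : ℝ) (1 : ℝ) → T, Continuous q → Function.Injective q →
    ∀ f : Set.Icc (0 : ℝ)
        (dist (q ⟨0, Set.left_mem_Icc.2 zero_le_one⟩)
              (q ⟨1, Set.right_mem_Icc.2 zero_le_one⟩)) → T,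
      arcProp (q ⟨0, Set.left_mem_Icc.2 zero_le_one⟩)
              (q ⟨1, Set.right_mem_Icc.2 zero_le_one⟩) f →
      Set.range q = Set.range f)
noncomputable section

/-- The space `ℓ¹(ℕ)` of summable real sequences. -/
abbrev ellOne : Type := lp (fun _ : ℕ => ℝ) 1

/-- The space `𝕋_{ℓ¹}` of subsets of `ℓ¹(ℕ)` which, rooted at `0`, are complete locally compact
rooted real trees. -/
def TreeL1 : Type :=
  {T : Set ellOne // (0 : ellOne) ∈ T ∧ IsComplete T ∧ LocallyCompactSpace ↥T ∧ IsRealTree ↥T}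

/-- Two pointed metric spaces are pointed isometric if there is a base-point preserving
bijective isometry between them. -/
def PointedIsometric (X₁ : Type*) [MetricSpace X₁] (ρ₁ : X₁)
    (X₂ : Type*) [MetricSpace X₂] (ρ₂ : X₂) : Prop :=
  ∃ f : X₁ → X₂, Isometry f ∧ Function.Bijective f ∧ f ρ₁ = ρ₂

namespace RTE
variable {T : Type*} [MetricSpace T]

lemma arc_dist_left {s t : T} {f : Set.Icc (0:ℝ) (dist s t) → T} (hf : arcProp s t f)
    (u : Set.Icc (0:ℝ) (dist s t)) : dist s (f u) = u.1 := by
  have := hf.1.dist_eq ⟨0, Set.left_mem_Icc.2 dist_nonneg⟩ u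
  rw [hf.2.1] at this
  rw [this, Subtype.dist_eq, Real.dist_eq, abs_of_nonpos (by simpa using u.2.1)]
  simp

lemma arc_dist_right {s t : T} {f : Set.Icc (0:ℝ) (dist s t) → T} (hf : arcProp s t f)
    (u : Set.Icc (0:ℝ) (dist s t)) : dist (f u) t = dist s t - u.1 := by
  have := hf.1.dist_eq u ⟨dist s t, Set.right_mem_Icc.2 dist_nonneg⟩
  rw [hf.2.2] at this
  rw [this, Subtype.dist_eq, Real.dist_eq, abs_of_nonpos (by simpa using sub_nonpos.2 u.2.2)]
  ring

lemma exists_between (h1 : ∀ s t : T, ∃! f, arcProp s t f) (s t : T) {r : ℝ}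
    (h0 : 0 ≤ r) (hr : r ≤ dist s t) :
    ∃ m : T, dist s m = r ∧ dist m t = dist s t - r := by
  obtain ⟨f, hf, -⟩ := h1 s t
  exact ⟨f ⟨r, h0, hr⟩, arc_dist_left hf _, arc_dist_right hf _⟩

/-- restriction of an arc is the (unique) arc to the intermediate point -/
lemma arc_restrict (h1 : ∀ s t : T, ∃! f, arcProp s t f) {s t : T}
    {f : Set.Icc (0:ℝ) (dist s t) → T} (hf : arcProp s t f)
    (r : Set.Icc (0:ℝ) (dist s t))
    {g : Set.Icc (0:ℝ) (dist s (f r)) → T} (hg : arcProp s (f r) g)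
    (u : ℝ) (hu1 : u ∈ Set.Icc (0:ℝ) (dist s (f r))) (hu2 : u ∈ Set.Icc (0:ℝ) (dist s t)) :
    g ⟨u, hu1⟩ = f ⟨u, hu2⟩ := by
  have hd : dist s (f r) = r.1 := arc_dist_left hf r
  have key : ∀ v : Set.Icc (0:ℝ) (dist s (f r)), (v : ℝ) ∈ Set.Icc (0:ℝ) (dist s t) := by
    rintro ⟨v, hv0, hv1⟩
    exact ⟨hv0, le_trans hv1 (hd ▸ r.2.2)⟩
  set g' : Set.Icc (0:ℝ) (dist s (f r)) → T := fun v => f ⟨v.1, key v⟩ with hg'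
  have harc : arcProp s (f r) g' := by
    refine ⟨?_, ?_, ?_⟩
    · intro a b
      have := hf.1 ⟨a.1, key a⟩ ⟨b.1, key b⟩
      simpa [g', Subtype.edist_eq, edist_dist, Subtype.dist_eq] using this
    · simp only [g']
      exact hf.2.1
    · show f _ = f r
      congr 1
      exact Subtype.ext hd
  have := (h1 s (f r)).unique hg harc
  rw [this]

/-- Gromov product of `x,y` based at `ρ`. -/
def gp (ρ x y : T) : ℝ := (dist ρ x + dist ρ y - dist x y) / 2

lemma gp_nonneg (ρ x y : T) : 0 ≤ gp ρ x y := by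
  have := dist_triangle x ρ y
  rw [dist_comm x ρ] at this
  unfold gp; linarith

lemma gp_le_left (ρ x y : T) : gp ρ x y ≤ dist ρ x := by
  have := dist_triangle ρ x y
  unfold gp; linarith

lemma gp_comm (ρ x y : T) : gp ρ x y = gp ρ y x := by
  unfold gp; rw [dist_comm x y]; ring

lemma gp_le_right (ρ x y : T) : gp ρ x y ≤ dist ρ y := gp_comm ρ x y ▸ gp_le_left ρ y x

lemma gp_ge_sub (ρ x y : T) : dist ρ x - dist x y ≤ gp ρ x y := by
  have := dist_triangle ρ y x
  rw [dist_comm y x] at this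
  unfold gp; linarith

lemma gp_self (ρ x : T) : gp ρ x x = dist ρ x := by unfold gp; simp

lemma gp_root (ρ y : T) : gp ρ ρ y = 0 := by unfold gp; simp

/-- The chosen arc from `s` to `t`. -/
def arcFrom (h1 : ∀ s t : T, ∃! f, arcProp s t f) (s t : T) :
    Set.Icc (0:ℝ) (dist s t) → T := (h1 s t).choose

lemma arcFrom_spec (h1 : ∀ s t : T, ∃! f, arcProp s t f) (s t : T) :
    arcProp s t (arcFrom h1 s t) := (h1 s t).choose_spec.1

lemma arc_restrict' (h1 : ∀ s t : T, ∃! f, arcProp s t f) {s t : T}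
    {f : Set.Icc (0:ℝ) (dist s t) → T} (hf : arcProp s t f)
    (r : Set.Icc (0:ℝ) (dist s t)) {m : T} (hm : m = f r)
    {g : Set.Icc (0:ℝ) (dist s m) → T} (hg : arcProp s m g)
    (u : ℝ) (hu1 : u ∈ Set.Icc (0:ℝ) (dist s m)) (hu2 : u ∈ Set.Icc (0:ℝ) (dist s t)) :
    g ⟨u, hu1⟩ = f ⟨u, hu2⟩ := by
  subst hm
  exact arc_restrict h1 hf r hg u hu1 hu2

section Meet
variable (hT : IsRealTree T) (ρ x y : T)

/-- The coincidence set of the two arcs from the root. -/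
def Bset : Set ℝ :=
  {t : ℝ | ∃ (hx : t ∈ Set.Icc (0:ℝ) (dist ρ x)) (hy : t ∈ Set.Icc (0:ℝ) (dist ρ y)),
    arcFrom hT.1 ρ x ⟨t, hx⟩ = arcFrom hT.1 ρ y ⟨t, hy⟩}

lemma Bset_zero : (0:ℝ) ∈ Bset hT ρ x y := by
  refine ⟨Set.left_mem_Icc.2 dist_nonneg, Set.left_mem_Icc.2 dist_nonneg, ?_⟩
  rw [(arcFrom_spec hT.1 ρ x).2.1, (arcFrom_spec hT.1 ρ y).2.1]

lemma Bset_le {t : ℝ} (ht : t ∈ Bset hT ρ x y) : t ≤ dist ρ x ∧ t ≤ dist ρ y := by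
  obtain ⟨hx, hy, -⟩ := ht
  exact ⟨hx.2, hy.2⟩

lemma Bset_nonneg {t : ℝ} (ht : t ∈ Bset hT ρ x y) : 0 ≤ t := by
  obtain ⟨hx, -, -⟩ := ht
  exact hx.1

lemma Bset_bdd : BddAbove (Bset hT ρ x y) :=
  ⟨dist ρ x, fun _ ht => (Bset_le hT ρ x y ht).1⟩

lemma Bset_down {t s : ℝ} (ht : t ∈ Bset hT ρ x y) (hs0 : 0 ≤ s) (hst : s ≤ t) :
    s ∈ Bset hT ρ x y := by
  obtain ⟨hx, hy, heq⟩ := ht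
  set m : T := arcFrom hT.1 ρ x ⟨t, hx⟩ with hm
  have hdm : dist ρ m = t := arc_dist_left (arcFrom_spec hT.1 ρ x) _
  have hsm : s ∈ Set.Icc (0:ℝ) (dist ρ m) := ⟨hs0, by rw [hdm]; exact hst⟩
  have hsx : s ∈ Set.Icc (0:ℝ) (dist ρ x) := ⟨hs0, le_trans hst hx.2⟩
  have hsy : s ∈ Set.Icc (0:ℝ) (dist ρ y) := ⟨hs0, le_trans hst hy.2⟩
  have e1 : arcFrom hT.1 ρ m ⟨s, hsm⟩ = arcFrom hT.1 ρ x ⟨s, hsx⟩ :=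
    arc_restrict' hT.1 (arcFrom_spec hT.1 ρ x) ⟨t, hx⟩ hm (arcFrom_spec hT.1 ρ m) s hsm hsx
  have e2 : arcFrom hT.1 ρ m ⟨s, hsm⟩ = arcFrom hT.1 ρ y ⟨s, hsy⟩ :=
    arc_restrict' hT.1 (arcFrom_spec hT.1 ρ y) ⟨t, hy⟩ (hm.trans heq) (arcFrom_spec hT.1 ρ m)
      s hsm hsy
  exact ⟨hsx, hsy, e1.symm.trans e2⟩

lemma Bset_sSup_mem : sSup (Bset hT ρ x y) ∈ Bset hT ρ x y := by
  set c0 := sSup (Bset hT ρ x y) with hc0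
  have hne : (Bset hT ρ x y).Nonempty := ⟨0, Bset_zero hT ρ x y⟩
  have h0c : 0 ≤ c0 := le_csSup (Bset_bdd hT ρ x y) (Bset_zero hT ρ x y)
  have hcx : c0 ≤ dist ρ x := csSup_le hne fun _ ht => (Bset_le hT ρ x y ht).1
  have hcy : c0 ≤ dist ρ y := csSup_le hne fun _ ht => (Bset_le hT ρ x y ht).2
  have hmx : c0 ∈ Set.Icc (0:ℝ) (dist ρ x) := ⟨h0c, hcx⟩
  have hmy : c0 ∈ Set.Icc (0:ℝ) (dist ρ y) := ⟨h0c, hcy⟩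
  refine ⟨hmx, hmy, ?_⟩
  have key : dist (arcFrom hT.1 ρ x ⟨c0, hmx⟩) (arcFrom hT.1 ρ y ⟨c0, hmy⟩) ≤ 0 := by
    refine le_of_forall_pos_le_add fun ε hε => ?_
    obtain ⟨t, htB, hlt⟩ := exists_lt_of_lt_csSup hne (show c0 - ε/3 < c0 by linarith)
    obtain ⟨hx, hy, heq⟩ := id htB
    have d1 : dist (arcFrom hT.1 ρ x ⟨c0, hmx⟩) (arcFrom hT.1 ρ x ⟨t, hx⟩) = |c0 - t| := by
      rw [(arcFrom_spec hT.1 ρ x).1.dist_eq, Subtype.dist_eq, Real.dist_eq]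
    have d2 : dist (arcFrom hT.1 ρ y ⟨t, hy⟩) (arcFrom hT.1 ρ y ⟨c0, hmy⟩) = |t - c0| := by
      rw [(arcFrom_spec hT.1 ρ y).1.dist_eq, Subtype.dist_eq, Real.dist_eq]
    have htc : t ≤ c0 := le_csSup (Bset_bdd hT ρ x y) htB
    have habs : |c0 - t| ≤ ε/3 := by rw [abs_of_nonneg (by linarith)]; linarith
    have habs' : |t - c0| ≤ ε/3 := by rw [abs_of_nonpos (by linarith)]; linarith
    calc dist (arcFrom hT.1 ρ x ⟨c0, hmx⟩) (arcFrom hT.1 ρ y ⟨c0, hmy⟩)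
        ≤ dist (arcFrom hT.1 ρ x ⟨c0, hmx⟩) (arcFrom hT.1 ρ x ⟨t, hx⟩)
          + dist (arcFrom hT.1 ρ x ⟨t, hx⟩) (arcFrom hT.1 ρ y ⟨c0, hmy⟩) := dist_triangle _ _ _
      _ ≤ dist (arcFrom hT.1 ρ x ⟨c0, hmx⟩) (arcFrom hT.1 ρ x ⟨t, hx⟩)
          + (dist (arcFrom hT.1 ρ x ⟨t, hx⟩) (arcFrom hT.1 ρ y ⟨t, hy⟩)
            + dist (arcFrom hT.1 ρ y ⟨t, hy⟩) (arcFrom hT.1 ρ y ⟨c0, hmy⟩)) := by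
            linarith [dist_triangle (arcFrom hT.1 ρ x ⟨t, hx⟩) (arcFrom hT.1 ρ y ⟨t, hy⟩)
              (arcFrom hT.1 ρ y ⟨c0, hmy⟩)]
      _ ≤ ε/3 + (0 + ε/3) := by
            rw [d1, d2, heq, dist_self]
            exact add_le_add habs (by linarith [habs'])
      _ ≤ 0 + ε := by linarith
  exact eq_of_dist_eq_zero (le_antisymm key dist_nonneg)
end Meet
section Meet2
variable (hT : IsRealTree T) (ρ x y : T)

lemma Bset_sSup_eq_gp : sSup (Bset hT ρ x y) = gp ρ x y := by
  set dx := dist ρ x with hdx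
  set dy := dist ρ y with hdy
  set c0 := sSup (Bset hT ρ x y) with hc0def
  obtain ⟨hmx, hmy, hagree⟩ := id (Bset_sSup_mem hT ρ x y)
  set w : T := arcFrom hT.1 ρ x ⟨c0, hmx⟩ with hwdef
  have h0c : (0:ℝ) ≤ c0 := hmx.1
  have hcx : c0 ≤ dx := hmx.2
  have hcy : c0 ≤ dy := hmy.2
  have hxw : dist x w = dx - c0 := by
    rw [dist_comm, hwdef]; exact arc_dist_right (arcFrom_spec hT.1 ρ x) ⟨c0, hmx⟩
  have hwy : dist w y = dy - c0 := by
    rw [hagree]; exact arc_dist_right (arcFrom_spec hT.1 ρ y) ⟨c0, hmy⟩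
  have hub : dist x y ≤ (dx - c0) + (dy - c0) := by
    calc dist x y ≤ dist x w + dist w y := dist_triangle _ _ _
      _ = _ := by rw [hxw, hwy]
  have hlb : dx + dy - 2*c0 ≤ dist x y := by
    rcases le_or_gt (dx + dy - 2*c0) 0 with hL0 | hL0
    · exact le_trans hL0 dist_nonneg
    · set L1 := dx - c0 with hL1
      set L2 := dy - c0 with hL2
      set L := L1 + L2 with hLdef
      have hL1n : 0 ≤ L1 := by simp only [hL1]; linarith
      have hL2n : 0 ≤ L2 := by simp only [hL2]; linarith
      have hLpos : 0 < L := by simp only [hLdef, hL1, hL2]; linarith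
      have mem1 : ∀ u : Set.Icc (0:ℝ) 1, u.1 * L ≤ L1 →
          dx - u.1 * L ∈ Set.Icc (0:ℝ) dx := by
        intro u hu
        have h1 : 0 ≤ u.1 * L := mul_nonneg u.2.1 hLpos.le
        exact ⟨by simp only [hL1] at hu; linarith, by linarith⟩
      have mem2 : ∀ u : Set.Icc (0:ℝ) 1, ¬(u.1 * L ≤ L1) → c0 + (u.1 * L - L1) ∈ Set.Icc (0:ℝ) dy := by
        intro u hu
        have h2 : u.1 * L ≤ L := by nlinarith [u.2.2, hLpos]
        have h : L1 < u.1 * L := not_le.1 hu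
        constructor
        · linarith
        · simp only [hL1, hL2, hLdef] at h2 ⊢; linarith
      set q : Set.Icc (0:ℝ) (1:ℝ) → T := fun u =>
        if u.1 * L ≤ L1 then arcFrom hT.1 ρ x (Set.projIcc 0 dx dist_nonneg (dx - u.1 * L))
        else arcFrom hT.1 ρ y (Set.projIcc 0 dy dist_nonneg (c0 + (u.1 * L - L1))) with hqdef
      have qval1 : ∀ (u : Set.Icc (0:ℝ) 1) (h : u.1 * L ≤ L1),
          q u = arcFrom hT.1 ρ x ⟨dx - u.1 * L, mem1 u h⟩ := by
        intro u h
        simp only [hqdef, if_pos h]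
        rw [Set.projIcc_of_mem _ (mem1 u h)]
      have qval2 : ∀ (u : Set.Icc (0:ℝ) 1) (h : ¬(u.1 * L ≤ L1)),
          q u = arcFrom hT.1 ρ y ⟨c0 + (u.1 * L - L1), mem2 u h⟩ := by
        intro u h
        simp only [hqdef, if_neg h]
        rw [Set.projIcc_of_mem _ (mem2 u h)]
      have hqc : Continuous q := by
        rw [hqdef]
        refine Continuous.if_le ?_ ?_ (continuous_subtype_val.mul continuous_const)
          continuous_const ?_
        · exact (arcFrom_spec hT.1 ρ x).1.continuous.comp (continuous_projIcc.comp
            (continuous_const.sub (continuous_subtype_val.mul continuous_const)))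
        · exact (arcFrom_spec hT.1 ρ y).1.continuous.comp (continuous_projIcc.comp
            (continuous_const.add ((continuous_subtype_val.mul continuous_const).sub
              continuous_const)))
        · intro u hu
          have e1 : dx - u.1 * L = c0 := by simp only [hL1] at hu; linarith
          have e2 : c0 + (u.1 * L - L1) = c0 := by rw [hu]; ring
          rw [e1, e2, Set.projIcc_of_mem _ hmx, Set.projIcc_of_mem _ hmy]
          exact hagree
      have hinj : Function.Injective q := by
        have key : ∀ u v : Set.Icc (0:ℝ) 1, u.1 * L ≤ L1 → ¬(v.1 * L ≤ L1) → q u ≠ q v := by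
          intro u v hu hv huv
          rw [qval1 u hu, qval2 v hv] at huv
          have e1 := arc_dist_left (arcFrom_spec hT.1 ρ x) ⟨dx - u.1 * L, mem1 u hu⟩
          have e2 := arc_dist_left (arcFrom_spec hT.1 ρ y) ⟨c0 + (v.1 * L - L1), mem2 v hv⟩
          rw [huv] at e1
          have teq : dx - u.1 * L = c0 + (v.1 * L - L1) := e1.symm.trans e2
          have hmemx : c0 + (v.1 * L - L1) ∈ Set.Icc (0:ℝ) dx := teq ▸ mem1 u hu
          have hargs : (⟨dx - u.1 * L, mem1 u hu⟩ : Set.Icc (0:ℝ) dx)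
              = ⟨c0 + (v.1 * L - L1), hmemx⟩ := Subtype.ext teq
          rw [hargs] at huv
          have hB : c0 + (v.1 * L - L1) ∈ Bset hT ρ x y := ⟨hmemx, mem2 v hv, huv⟩
          have := le_csSup (Bset_bdd hT ρ x y) hB
          have hvL : L1 < v.1 * L := not_le.1 hv
          rw [← hc0def] at this
          linarith
        intro u v huv
        by_cases hu : u.1 * L ≤ L1 <;> by_cases hv : v.1 * L ≤ L1
        · rw [qval1 u hu, qval1 v hv] at huv
          have h3 : dx - u.1 * L = dx - v.1 * L :=
            Subtype.ext_iff.1 ((arcFrom_spec hT.1 ρ x).1.injective huv)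
          have h4 : u.1 * L = v.1 * L := by linarith
          exact Subtype.ext (mul_right_cancel₀ hLpos.ne' h4)
        · exact absurd huv (key u v hu hv)
        · exact absurd huv.symm (key v u hv hu)
        · rw [qval2 u hu, qval2 v hv] at huv
          have h3 : c0 + (u.1 * L - L1) = c0 + (v.1 * L - L1) :=
            Subtype.ext_iff.1 ((arcFrom_spec hT.1 ρ y).1.injective huv)
          have h4 : u.1 * L = v.1 * L := by linarith
          exact Subtype.ext (mul_right_cancel₀ hLpos.ne' h4)
      have hq0 : q ⟨0, Set.left_mem_Icc.2 zero_le_one⟩ = x := by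
        have h0 : (⟨0, Set.left_mem_Icc.2 zero_le_one⟩ : Set.Icc (0:ℝ) 1).1 * L ≤ L1 := by
          simp [hL1n]
        rw [qval1 _ h0]
        have : (⟨dx - (⟨0, Set.left_mem_Icc.2 zero_le_one⟩ : Set.Icc (0:ℝ) 1).1 * L,
            mem1 _ h0⟩ : Set.Icc (0:ℝ) dx) = ⟨dx, Set.right_mem_Icc.2 dist_nonneg⟩ :=
          Subtype.ext (by simp)
        rw [this]
        exact (arcFrom_spec hT.1 ρ x).2.2
      have hq1 : q ⟨1, Set.right_mem_Icc.2 zero_le_one⟩ = y := by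
        by_cases h : (⟨1, Set.right_mem_Icc.2 zero_le_one⟩ : Set.Icc (0:ℝ) 1).1 * L ≤ L1
        · have hL2z : L2 = 0 := by
            simp only at h
            rw [one_mul, hLdef] at h
            linarith
          rw [qval1 _ h]
          have e1 : (⟨dx - (⟨1, Set.right_mem_Icc.2 zero_le_one⟩ : Set.Icc (0:ℝ) 1).1 * L,
              mem1 _ h⟩ : Set.Icc (0:ℝ) dx) = ⟨c0, hmx⟩ := by
            apply Subtype.ext
            simp only [one_mul, hLdef, hL1, hL2]
            simp only [hL2] at hL2z
            linarith
          rw [e1, ← hwdef, hagree]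
          have e2 : (⟨c0, hmy⟩ : Set.Icc (0:ℝ) dy) = ⟨dy, Set.right_mem_Icc.2 dist_nonneg⟩ := by
            apply Subtype.ext
            simp only [hL2] at hL2z
            simp only
            linarith
          rw [e2]
          exact (arcFrom_spec hT.1 ρ y).2.2
        · rw [qval2 _ h]
          have e : (⟨c0 + ((⟨1, Set.right_mem_Icc.2 zero_le_one⟩ : Set.Icc (0:ℝ) 1).1 * L - L1),
              mem2 _ h⟩ : Set.Icc (0:ℝ) dy) = ⟨dy, Set.right_mem_Icc.2 dist_nonneg⟩ := by
            apply Subtype.ext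
            simp only [one_mul, hLdef, hL1, hL2]
            ring
          rw [e]
          exact (arcFrom_spec hT.1 ρ y).2.2
      obtain ⟨farc, hfarc, -⟩ := hT.1 (q ⟨0, Set.left_mem_Icc.2 zero_le_one⟩)
        (q ⟨1, Set.right_mem_Icc.2 zero_le_one⟩)
      have hrange := hT.2 q hqc hinj farc hfarc
      have hustar : L1 / L ∈ Set.Icc (0:ℝ) 1 :=
        ⟨div_nonneg hL1n hLpos.le, by rw [div_le_one hLpos]; linarith⟩
      have harg : L1 / L * L = L1 := div_mul_cancel₀ _ hLpos.ne'
      have hle : (⟨L1 / L, hustar⟩ : Set.Icc (0:ℝ) 1).1 * L ≤ L1 := by rw [harg]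
      have hwq : q ⟨L1 / L, hustar⟩ = w := by
        rw [qval1 _ hle, hwdef]
        congr 1
        apply Subtype.ext
        simp only [harg]
        simp only [hL1]
        ring
      have hwmem : w ∈ Set.range farc := by
        rw [← hrange]
        exact ⟨_, hwq⟩
      obtain ⟨v, hv⟩ := hwmem
      have e1 := arc_dist_left hfarc v
      have e2 := arc_dist_right hfarc v
      have s1 : dist x w = (v : ℝ) := by
        rw [← hq0, ← hv]; exact e1
      have s2 : dist w y = dist x y - (v : ℝ) := by
        rw [← hq0, ← hq1, ← hv]; rw [e2]
      rw [hxw] at s1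
      rw [hwy] at s2
      simp only [hL1] at s1
      simp only [hL2] at s2
      linarith
  have : dist x y = dx + dy - 2*c0 := by linarith
  simp only [gp, ← hdx, ← hdy, this]
  ring

include hT in
lemma mem_Bset_of_le_gp {t : ℝ} (ht0 : 0 ≤ t) (ht : t ≤ gp ρ x y) : t ∈ Bset hT ρ x y :=
  Bset_down hT ρ x y (Bset_sSup_mem hT ρ x y) ht0 (by rw [Bset_sSup_eq_gp]; exact ht)

include hT in
lemma gp_isosceles (z : T) {t : ℝ} (ht0 : 0 ≤ t) (hxy : t ≤ gp ρ x y) (hyz : t ≤ gp ρ y z) :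
    t ≤ gp ρ x z := by
  obtain ⟨h1x, h1y, e1⟩ := mem_Bset_of_le_gp hT ρ x y ht0 hxy
  obtain ⟨h2y, h2z, e2⟩ := mem_Bset_of_le_gp hT ρ y z ht0 hyz
  have e3 : arcFrom hT.1 ρ x ⟨t, h1x⟩ = arcFrom hT.1 ρ z ⟨t, h2z⟩ := e1.trans e2
  have hB : t ∈ Bset hT ρ x z := ⟨h1x, h2z, e3⟩
  have := le_csSup (Bset_bdd hT ρ x z) hB
  rwa [Bset_sSup_eq_gp] at this

include hT in
variable (z' : T) in
lemma gp_min_le : min (gp ρ x y) (gp ρ y z') ≤ gp ρ x z' := by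
  exact gp_isosceles hT ρ x y z' (le_min (gp_nonneg ρ x y) (gp_nonneg ρ y z'))
    (min_le_left _ _) (min_le_right _ _)

end Meet2
section Proper
open Metric
variable [CompleteSpace T] [LocallyCompactSpace T]

lemma tree_proper (h1 : ∀ s t : T, ∃! f, arcProp s t f) (ρ : T) : ProperSpace T := by
  have claim : ∀ r : ℝ, IsCompact (closedBall ρ r) := by
    by_contra hcon
    push_neg at hcon
    obtain ⟨r0, hr0⟩ := hcon
    set K : Set ℝ := {r : ℝ | 0 ≤ r ∧ IsCompact (closedBall ρ r)} with hKdef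
    have hK0 : (0:ℝ) ∈ K := ⟨le_refl 0, by simpa using isCompact_singleton⟩
    have hKne : K.Nonempty := ⟨0, hK0⟩
    have hKdown : ∀ r ∈ K, ∀ r', 0 ≤ r' → r' ≤ r → r' ∈ K := by
      rintro r ⟨-, hrc⟩ r' h0 hle
      exact ⟨h0, hrc.of_isClosed_subset Metric.isClosed_closedBall (closedBall_subset_closedBall hle)⟩
    have hr00 : 0 ≤ r0 := by
      by_contra h
      push_neg at h
      exact hr0 (by rw [closedBall_eq_empty.2 h]; exact isCompact_empty)
    have hKbdd : BddAbove K := by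
      refine ⟨r0, fun r hr => ?_⟩
      by_contra hlt
      push_neg at hlt
      exact hr0 (hKdown r hr r0 hr00 hlt.le).2
    set R := sSup K with hRdef
    have hR0 : 0 ≤ R := le_csSup hKbdd hK0
    have hRK : R ∈ K := by
      refine ⟨hR0, TotallyBounded.isCompact_of_isClosed ?_ Metric.isClosed_closedBall⟩
      rw [Metric.totallyBounded_iff]
      intro ε hε
      obtain ⟨r, hrK, hrlt⟩ := exists_lt_of_lt_csSup hKne (show R - ε/3 < R by linarith)
      have hrR : r ≤ R := le_csSup hKbdd hrK
      obtain ⟨s, hsfin, hscov⟩ :=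
        (Metric.totallyBounded_iff.1 hrK.2.totallyBounded) (ε/3) (by linarith)
      refine ⟨s, hsfin, fun z hz => ?_⟩
      rcases le_or_gt (dist ρ z) r with hle | hlt2
      · have := hscov (mem_closedBall'.2 hle)
        simp only [Set.mem_iUnion] at this ⊢
        obtain ⟨y, hy, hmem⟩ := this
        exact ⟨y, hy, mem_ball.2 (lt_of_lt_of_le (mem_ball.1 hmem) (by linarith))⟩
      · obtain ⟨m, hm1, hm2⟩ := exists_between h1 ρ z hrK.1 hlt2.le
        have hmball : m ∈ closedBall ρ r := mem_closedBall'.2 hm1.le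
        have := hscov hmball
        simp only [Set.mem_iUnion] at this ⊢
        obtain ⟨y, hy, hmem⟩ := this
        refine ⟨y, hy, mem_ball.2 ?_⟩
        have hdzm : dist z m ≤ ε/3 := by
          rw [dist_comm, hm2]
          have : dist ρ z ≤ R := mem_closedBall'.1 hz
          linarith
        calc dist z y ≤ dist z m + dist m y := dist_triangle _ _ _
          _ < ε/3 + ε/3 := by have := mem_ball.1 hmem; linarith
          _ < ε := by linarith
    -- step 2
    have hrad : ∀ z : T, ∃ rz > 0, IsCompact (closedBall z rz) := fun z =>
      exists_isCompact_closedBall z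
    choose rad hradpos hradc using hrad
    obtain ⟨t, htcov⟩ := hRK.2.elim_finite_subcover
      (fun z : T => ball z (rad z / 2)) (fun z => isOpen_ball)
      (fun z hz => Set.mem_iUnion.2 ⟨z, mem_ball_self (by linarith [hradpos z])⟩)
    have hρmem : ρ ∈ closedBall ρ R := mem_closedBall_self hR0
    have htne : t.Nonempty := by
      rcases Finset.eq_empty_or_nonempty t with h | h
      · exfalso
        have := htcov hρmem
        simp [h] at this
      · exact h
    set δ : ℝ := t.inf' htne (fun z => rad z / 2) with hδdef
    have hδpos : 0 < δ := by
      rw [hδdef, Finset.lt_inf'_iff]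
      exact fun z _ => by linarith [hradpos z]
    have hcov2 : closedBall ρ (R + δ) ⊆ ⋃ z ∈ t, closedBall z (rad z) := by
      intro z hz
      have hz' : dist ρ z ≤ R + δ := mem_closedBall'.1 hz
      have hm : ∃ m ∈ closedBall ρ R, dist m z ≤ δ := by
        rcases le_or_gt (dist ρ z) R with hle | hlt2
        · exact ⟨z, mem_closedBall'.2 hle, by simp [hδpos.le]⟩
        · obtain ⟨m, hm1, hm2⟩ := exists_between h1 ρ z hR0 hlt2.le
          exact ⟨m, mem_closedBall'.2 hm1.le, by rw [hm2]; linarith⟩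
      obtain ⟨m, hmball, hmz⟩ := hm
      have := htcov hmball
      simp only [Set.mem_iUnion] at this
      obtain ⟨c, hc, hmem⟩ := this
      have hδc : δ ≤ rad c / 2 := Finset.inf'_le _ hc
      refine Set.mem_biUnion hc (mem_closedBall.2 ?_)
      calc dist z c ≤ dist z m + dist m c := dist_triangle _ _ _
        _ ≤ δ + rad c / 2 := add_le_add (by rw [dist_comm]; exact hmz) (mem_ball.1 hmem).le
        _ ≤ rad c := by linarith
    have hcomp : IsCompact (⋃ z ∈ (t : Set T), closedBall z (rad z)) :=
      t.finite_toSet.isCompact_biUnion (fun z _ => hradc z)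
    have : (R + δ) ∈ K :=
      ⟨by linarith, hcomp.of_isClosed_subset Metric.isClosed_closedBall (by simpa using hcov2)⟩
    have := le_csSup hKbdd this
    linarith
  refine ⟨fun x r => ?_⟩
  exact (claim (dist ρ x + r)).of_isClosed_subset Metric.isClosed_closedBall
    (fun z hz => mem_closedBall.2 (by
      have h1' := mem_closedBall.1 hz
      calc dist z ρ ≤ dist z x + dist x ρ := dist_triangle _ _ _
        _ ≤ r + dist x ρ := by linarith
        _ = dist ρ x + r := by rw [dist_comm]; ring))
end Proper

/-- pure order lemma -/
lemma ord1 {a b cc : ℝ} (h1 : min a b ≤ cc) (h2 : min a cc ≤ b) (h3 : min b cc ≤ a) :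
    min a cc = min b cc ∧ min a b = min a cc := by
  rcases le_total a b with h | h <;> rcases le_total a cc with h4 | h4 <;>
    rcases le_total b cc with h5 | h5 <;>
    simp_all [min_def] <;> first | rfl | (constructor <;> linarith) | linarith

lemma abs_id (p q : ℝ) : |p - q| = p + q - 2 * min p q := by
  rcases le_total p q with h | h
  · rw [abs_of_nonpos (by linarith), min_eq_left h]; ring
  · rw [abs_of_nonneg (by linarith), min_eq_right h]; ring

lemma minstep {A B a b cc : ℝ} (ha : min a cc = min b cc) (hab : min a b = min a cc)
    (hAB : min A cc = min B cc) :
    min (max A a - A) (max B b - B) = min (max A a) cc - min A cc := by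
  rcases le_or_gt cc A with hcA | hcA
  · have hAc : min A cc = cc := min_eq_right hcA
    have hcB : cc ≤ B := by
      rw [hAc] at hAB
      exact hAB.trans_le (min_le_left _ _)
    have hrhs : min (max A a) cc = cc := min_eq_right (hcA.trans (le_max_left _ _))
    rw [hrhs, hAc, sub_self]
    have key : a ≤ A ∨ b ≤ B := by
      by_contra h
      push_neg at h
      have h1 : cc < min a b := lt_min (lt_of_le_of_lt hcA h.1) (lt_of_le_of_lt hcB h.2)
      have h2 : min a b ≤ cc := hab.trans_le (min_le_right _ _)
      linarith
    rcases key with h | h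
    · rw [max_eq_left h, sub_self]
      exact min_eq_left (by linarith [le_max_left B b])
    · rw [max_eq_left h, sub_self]
      exact min_eq_right (by linarith [le_max_left A a])
  · have hAc : min A cc = A := min_eq_left hcA.le
    have hBA : B = A := by
      rw [hAc] at hAB
      rcases le_total B cc with h | h
      · rw [min_eq_left h] at hAB; exact hAB.symm
      · rw [min_eq_right h] at hAB; linarith
    rw [hBA, hAc, min_sub_sub_right]
    congr 1
    rcases le_total a b with h | h
    · have hac : a ≤ cc := by
        have h6 : min a b = a := min_eq_left h
        rw [h6] at hab
        exact hab.trans_le (min_le_right _ _)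
      rcases le_total b cc with hbc | hbc
      · have hba : b = a := by rw [min_eq_left hac, min_eq_left hbc] at ha; exact ha.symm
        rw [hba, min_self]
        exact (min_eq_left (max_le hcA.le hac)).symm
      · have hca : a = cc := by
          rw [min_eq_right hbc] at ha
          exact le_antisymm hac (ha ▸ min_le_left a cc)
        rw [max_eq_right (le_of_lt (hca ▸ hcA)), hca, min_self]
        exact min_eq_left (le_trans hbc (le_max_right A b))
    · have hbc : b ≤ cc := by
        have h6 : min a b = b := min_eq_right h
        rw [h6] at hab
        exact hab.trans_le (min_le_right _ _)
      rcases le_total a cc with hac | hac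
      · have hba : b = a := by rw [min_eq_right h, min_eq_left hac] at hab; exact hab
        rw [hba, min_self]
        exact (min_eq_left (max_le hcA.le hac)).symm
      · have hbcc : b = cc := by rw [min_eq_right h, min_eq_right hac] at hab; exact hab
        rw [hbcc, max_eq_right hcA.le]

section Embed
variable (ρ : T) (u : ℕ → T)

/-- running max of Gromov products with the dense sequence -/
def cfun (x : T) : ℕ → ℝ
  | 0 => 0
  | n+1 => max (cfun x n) (gp ρ x (u n))

variable {ρ u}

lemma cfun_nonneg (x : T) : ∀ n, 0 ≤ cfun ρ u x n
  | 0 => le_refl 0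
  | n+1 => le_trans (cfun_nonneg x n) (le_max_left _ _)

lemma cfun_le (x : T) : ∀ n, cfun ρ u x n ≤ dist ρ x
  | 0 => dist_nonneg
  | n+1 => max_le (cfun_le x n) (gp_le_left ρ x (u n))

lemma cfun_mono (x : T) : Monotone (cfun ρ u x) :=
  monotone_nat_of_le_succ fun n => le_max_left _ _

lemma cfun_ge (x : T) {k n : ℕ} (h : k < n) : gp ρ x (u k) ≤ cfun ρ u x n := by
  induction n with
  | zero => omega
  | succ m ih =>
    rcases Nat.lt_succ_iff_lt_or_eq.1 h with h' | h'
    · exact le_trans (ih h') (le_max_left _ _)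
    · subst h'; exact le_max_right _ _

lemma cfun_tendsto (hu : DenseRange u) (x : T) :
    Filter.Tendsto (cfun ρ u x) Filter.atTop (nhds (dist ρ x)) := by
  rw [Metric.tendsto_atTop]
  intro ε hε
  obtain ⟨k, hk⟩ := hu.exists_dist_lt x (half_pos hε)
  refine ⟨k + 1, fun n hn => ?_⟩
  have h1 : gp ρ x (u k) ≤ cfun ρ u x n := cfun_ge x (by omega)
  have h2 : dist ρ x - dist x (u k) ≤ gp ρ x (u k) := gp_ge_sub ρ x (u k)
  have h3 : cfun ρ u x n ≤ dist ρ x := cfun_le x n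
  rw [Real.dist_eq, abs_of_nonpos (by linarith)]
  have hk' : dist x (u k) < ε / 2 := hk
  linarith

/-- the coordinates of the embedding -/
def fcoord (x : T) (n : ℕ) : ℝ := cfun ρ u x (n+1) - cfun ρ u x n

lemma fcoord_nonneg (x : T) (n : ℕ) : 0 ≤ fcoord (ρ := ρ) (u := u) x n :=
  sub_nonneg.2 (cfun_mono x (Nat.le_succ n))

lemma fcoord_sum (x : T) (n : ℕ) :
    ∑ i ∈ Finset.range n, fcoord (ρ := ρ) (u := u) x i = cfun ρ u x n := by
  simp only [fcoord]
  rw [Finset.sum_range_sub (f := cfun ρ u x)]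
  show cfun ρ u x n - 0 = _
  ring

lemma fcoord_hasSum (hu : DenseRange u) (x : T) :
    HasSum (fcoord (ρ := ρ) (u := u) x) (dist ρ x) := by
  rw [hasSum_iff_tendsto_nat_of_nonneg (fcoord_nonneg x)]
  simpa only [fcoord_sum] using cfun_tendsto hu x

lemma fcoord_root (hu : DenseRange u) (n : ℕ) : fcoord (ρ := ρ) (u := u) ρ n = 0 := by
  have hz : ∀ m, cfun ρ u ρ m = 0 := by
    intro m
    induction m with
    | zero => rfl
    | succ k ih => show max (cfun ρ u ρ k) (gp ρ ρ (u k)) = 0; rw [ih, gp_root]; simp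
  show cfun ρ u ρ (n+1) - cfun ρ u ρ n = 0
  rw [hz, hz]; ring

section withTree
variable (hT : IsRealTree T)

include hT in
lemma gp_triple (x y z : T) :
    min (gp ρ x z) (gp ρ x y) = min (gp ρ y z) (gp ρ x y) ∧
      min (gp ρ x z) (gp ρ y z) = min (gp ρ x z) (gp ρ x y) := by
  have h1 : min (gp ρ x z) (gp ρ y z) ≤ gp ρ x y := by
    refine gp_isosceles hT ρ x z y (le_min (gp_nonneg ρ x z) (gp_nonneg ρ y z))
      (min_le_left _ _) ?_
    rw [gp_comm ρ z y]; exact min_le_right _ _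
  have h2 : min (gp ρ x z) (gp ρ x y) ≤ gp ρ y z := by
    refine gp_isosceles hT ρ y x z (le_min (gp_nonneg ρ x z) (gp_nonneg ρ x y)) ?_
      (min_le_left _ _)
    rw [gp_comm ρ y x]; exact min_le_right _ _
  have h3 : min (gp ρ y z) (gp ρ x y) ≤ gp ρ x z :=
    gp_isosceles hT ρ x y z (le_min (gp_nonneg ρ y z) (gp_nonneg ρ x y))
      (min_le_right _ _) (min_le_left _ _)
  exact ord1 h1 h2 h3

include hT in
lemma cfun_min_eq (x y : T) :
    ∀ n, min (cfun ρ u x n) (gp ρ x y) = min (cfun ρ u y n) (gp ρ x y)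
  | 0 => rfl
  | n+1 => by
    show min (max (cfun ρ u x n) (gp ρ x (u n))) (gp ρ x y)
        = min (max (cfun ρ u y n) (gp ρ y (u n))) (gp ρ x y)
    rw [min_max_distrib_right, min_max_distrib_right, cfun_min_eq x y n,
      (gp_triple hT (ρ := ρ) x y (u n)).1]

include hT in
lemma abs_fcoord_sum (x y : T) (n : ℕ) :
    ∑ i ∈ Finset.range n, |fcoord (ρ := ρ) (u := u) x i - fcoord (ρ := ρ) (u := u) y i|
      = cfun ρ u x n + cfun ρ u y n - 2 * min (cfun ρ u x n) (gp ρ x y) := by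
  induction n with
  | zero =>
    simp only [Finset.range_zero, Finset.sum_empty]
    show (0:ℝ) = 0 + 0 - 2 * min 0 (gp ρ x y)
    rw [min_eq_left (gp_nonneg ρ x y)]
    ring
  | succ n ih =>
    rw [Finset.sum_range_succ, ih]
    have hstep : min (cfun ρ u x (n+1) - cfun ρ u x n) (cfun ρ u y (n+1) - cfun ρ u y n)
        = min (cfun ρ u x (n+1)) (gp ρ x y) - min (cfun ρ u x n) (gp ρ x y) := by
      show min (max (cfun ρ u x n) (gp ρ x (u n)) - cfun ρ u x n)
          (max (cfun ρ u y n) (gp ρ y (u n)) - cfun ρ u y n)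
        = min (max (cfun ρ u x n) (gp ρ x (u n))) (gp ρ x y)
          - min (cfun ρ u x n) (gp ρ x y)
      exact minstep (gp_triple hT (ρ := ρ) x y (u n)).1
        (gp_triple hT (ρ := ρ) x y (u n)).2 (cfun_min_eq hT x y n)
    have habs : |fcoord (ρ := ρ) (u := u) x n - fcoord (ρ := ρ) (u := u) y n|
        = fcoord (ρ := ρ) (u := u) x n + fcoord (ρ := ρ) (u := u) y n
          - 2 * min (fcoord (ρ := ρ) (u := u) x n) (fcoord (ρ := ρ) (u := u) y n) :=
      abs_id _ _
    rw [habs]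
    show _ = cfun ρ u x (n+1) + cfun ρ u y (n+1) - 2 * min (cfun ρ u x (n+1)) (gp ρ x y)
    rw [show fcoord (ρ := ρ) (u := u) x n = cfun ρ u x (n+1) - cfun ρ u x n from rfl,
      show fcoord (ρ := ρ) (u := u) y n = cfun ρ u y (n+1) - cfun ρ u y n from rfl, hstep]
    ring


include hT in
lemma abs_fcoord_hasSum (hu : DenseRange u) (x y : T) :
    HasSum (fun n => |fcoord (ρ := ρ) (u := u) x n - fcoord (ρ := ρ) (u := u) y n|)
      (dist x y) := by
  rw [hasSum_iff_tendsto_nat_of_nonneg (fun n => abs_nonneg _)]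
  have heq : (fun n => ∑ i ∈ Finset.range n,
      |fcoord (ρ := ρ) (u := u) x i - fcoord (ρ := ρ) (u := u) y i|)
      = fun n => cfun ρ u x n + cfun ρ u y n - 2 * min (cfun ρ u x n) (gp ρ x y) :=
    funext (abs_fcoord_sum hT x y)
  rw [heq]
  have hlim : dist ρ x + dist ρ y - 2 * min (dist ρ x) (gp ρ x y) = dist x y := by
    rw [min_eq_right (gp_le_left ρ x y)]
    unfold gp; ring
  rw [← hlim]
  exact ((cfun_tendsto hu x).add (cfun_tendsto hu y)).sub
    (((cfun_tendsto hu x).min tendsto_const_nhds).const_mul 2)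

end withTree
end Embed

section Transfer
variable {X Y : Type*} [MetricSpace X] [MetricSpace Y]

lemma isRealTree_transfer (e : X ≃ᵢ Y) (hX : IsRealTree X) : IsRealTree Y := by
  constructor
  · intro s t
    obtain ⟨g, hg, hgu⟩ := hX.1 (e.symm s) (e.symm t)
    have hd : dist (e.symm s) (e.symm t) = dist s t := e.symm.isometry.dist_eq s t
    have hmem : ∀ v : Set.Icc (0:ℝ) (dist s t),
        v.1 ∈ Set.Icc (0:ℝ) (dist (e.symm s) (e.symm t)) := by
      intro v; rw [hd]; exact v.2
    have hmem' : ∀ w : Set.Icc (0:ℝ) (dist (e.symm s) (e.symm t)),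
        w.1 ∈ Set.Icc (0:ℝ) (dist s t) := by
      intro w; rw [← hd]; exact w.2
    refine ⟨fun v => e (g ⟨v.1, hmem v⟩), ⟨?_, ?_, ?_⟩, ?_⟩
    · intro a b
      rw [e.isometry.edist_eq, hg.1 _ _]
      rfl
    · exact (congrArg e hg.2.1).trans (e.apply_symm_apply s)
    · have harg : (⟨dist s t, hmem ⟨dist s t, Set.right_mem_Icc.2 dist_nonneg⟩⟩ :
          Set.Icc (0:ℝ) (dist (e.symm s) (e.symm t)))
          = ⟨dist (e.symm s) (e.symm t), Set.right_mem_Icc.2 dist_nonneg⟩ :=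
        Subtype.ext hd.symm
      exact (congrArg (fun z => e (g z)) harg).trans
        ((congrArg e hg.2.2).trans (e.apply_symm_apply t))
    · intro f' hf'
      have hg' : arcProp (e.symm s) (e.symm t) (fun w => e.symm (f' ⟨w.1, hmem' w⟩)) := by
        refine ⟨?_, ?_, ?_⟩
        · intro a b
          rw [e.symm.isometry.edist_eq, hf'.1 _ _]
          rfl
        · exact congrArg e.symm hf'.2.1
        · have harg : (⟨dist (e.symm s) (e.symm t),
              hmem' ⟨dist (e.symm s) (e.symm t), Set.right_mem_Icc.2 dist_nonneg⟩⟩ :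
              Set.Icc (0:ℝ) (dist s t))
              = ⟨dist s t, Set.right_mem_Icc.2 dist_nonneg⟩ := Subtype.ext hd
          exact (congrArg (fun z => e.symm (f' z)) harg).trans (congrArg e.symm hf'.2.2)
      have hgg := hgu _ hg'
      funext v
      show f' v = e (g ⟨v.1, hmem v⟩)
      rw [← hgg]
      exact (e.apply_symm_apply (f' v)).symm
  · intro q hqc hqi f hf
    set q' : Set.Icc (0:ℝ) (1:ℝ) → X := fun w => e.symm (q w) with hq'def
    have hq'c : Continuous q' := e.symm.continuous.comp hqc
    have hq'i : Function.Injective q' := fun a b h => hqi (e.symm.injective h)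
    have hd : dist (q' ⟨0, Set.left_mem_Icc.2 zero_le_one⟩)
          (q' ⟨1, Set.right_mem_Icc.2 zero_le_one⟩)
        = dist (q ⟨0, Set.left_mem_Icc.2 zero_le_one⟩)
          (q ⟨1, Set.right_mem_Icc.2 zero_le_one⟩) :=
      e.symm.isometry.dist_eq _ _
    have hmem' : ∀ w : Set.Icc (0:ℝ) (dist (q' ⟨0, Set.left_mem_Icc.2 zero_le_one⟩)
        (q' ⟨1, Set.right_mem_Icc.2 zero_le_one⟩)), w.1 ∈ Set.Icc (0:ℝ)
          (dist (q ⟨0, Set.left_mem_Icc.2 zero_le_one⟩)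
            (q ⟨1, Set.right_mem_Icc.2 zero_le_one⟩)) := by
      intro w; rw [← hd]; exact w.2
    have hmem : ∀ w : Set.Icc (0:ℝ) (dist (q ⟨0, Set.left_mem_Icc.2 zero_le_one⟩)
        (q ⟨1, Set.right_mem_Icc.2 zero_le_one⟩)), w.1 ∈ Set.Icc (0:ℝ)
          (dist (q' ⟨0, Set.left_mem_Icc.2 zero_le_one⟩)
            (q' ⟨1, Set.right_mem_Icc.2 zero_le_one⟩)) := by
      intro w; rw [hd]; exact w.2
    have hf' : arcProp (q' ⟨0, Set.left_mem_Icc.2 zero_le_one⟩)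
        (q' ⟨1, Set.right_mem_Icc.2 zero_le_one⟩)
        (fun w => e.symm (f ⟨w.1, hmem' w⟩)) := by
      refine ⟨?_, ?_, ?_⟩
      · intro a b
        rw [e.symm.isometry.edist_eq, hf.1 _ _]
        rfl
      · exact congrArg e.symm hf.2.1
      · have harg : (⟨dist (q' ⟨0, Set.left_mem_Icc.2 zero_le_one⟩)
              (q' ⟨1, Set.right_mem_Icc.2 zero_le_one⟩),
            hmem' ⟨dist (q' ⟨0, Set.left_mem_Icc.2 zero_le_one⟩)
              (q' ⟨1, Set.right_mem_Icc.2 zero_le_one⟩),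
              Set.right_mem_Icc.2 dist_nonneg⟩⟩ :
            Set.Icc (0:ℝ) (dist (q ⟨0, Set.left_mem_Icc.2 zero_le_one⟩)
              (q ⟨1, Set.right_mem_Icc.2 zero_le_one⟩)))
            = ⟨dist (q ⟨0, Set.left_mem_Icc.2 zero_le_one⟩)
                (q ⟨1, Set.right_mem_Icc.2 zero_le_one⟩),
              Set.right_mem_Icc.2 dist_nonneg⟩ := Subtype.ext hd
        exact (congrArg (fun z => e.symm (f z)) harg).trans (congrArg e.symm hf.2.2)
    have hr := hX.2 q' hq'c hq'i _ hf'
    have h1 : Set.range q' = e.symm '' Set.range q := Set.range_comp e.symm q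
    have h2 : Set.range (fun w => e.symm (f ⟨w.1, hmem' w⟩)) = e.symm '' Set.range f := by
      apply Set.eq_of_subset_of_subset
      · rintro z ⟨w, rfl⟩
        exact ⟨f ⟨w.1, hmem' w⟩, ⟨_, rfl⟩, rfl⟩
      · rintro z ⟨w0, ⟨w, rfl⟩, rfl⟩
        exact ⟨⟨w.1, hmem w⟩, rfl⟩
    rw [h1, h2] at hr
    exact Set.image_injective.2 e.symm.injective hr
end Transfer

end RTE

/-- Every complete, locally compact rooted real tree embeds isometrically into `ℓ¹(ℕ)`, root to
`0`; in particular its pointed isometry class has a representative in `𝕋_{ℓ¹}`. -/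
theorem embeds_in_ellOne (T : Type*) [MetricSpace T] [CompleteSpace T] [LocallyCompactSpace T]
    (ρ : T) (hT : IsRealTree T) :
    (∃ f : T → ellOne, Isometry f ∧ f ρ = 0) ∧
    ∃ S : TreeL1, PointedIsometric T ρ ↥S.1 ⟨0, S.2.1⟩ := by
  haveI : ProperSpace T := RTE.tree_proper hT.1 ρ
  haveI : Nonempty T := ⟨ρ⟩
  obtain ⟨u, hu⟩ := TopologicalSpace.exists_dense_seq T
  have hmem : ∀ x : T, Memℓp (fun n => RTE.fcoord (ρ := ρ) (u := u) x n) 1 := by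
    intro x
    apply memℓp_gen
    have h2 : (fun n => ‖RTE.fcoord (ρ := ρ) (u := u) x n‖ ^ (1:ENNReal).toReal)
        = fun n => RTE.fcoord (ρ := ρ) (u := u) x n := by
      funext n
      rw [ENNReal.toReal_one, Real.rpow_one, Real.norm_eq_abs,
        abs_of_nonneg (RTE.fcoord_nonneg x n)]
    rw [h2]
    exact (RTE.fcoord_hasSum hu x).summable
  set F : T → ellOne := fun x => ⟨fun n => RTE.fcoord (ρ := ρ) (u := u) x n, hmem x⟩ with hF
  have hFdist : ∀ x y : T, dist (F x) (F y) = dist x y := by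
    intro x y
    rw [dist_eq_norm]
    have h1 : (0:ℝ) < (1:ENNReal).toReal := by simp
    have h2 := lp.norm_rpow_eq_tsum h1 (F x - F y)
    simp only [ENNReal.toReal_one, Real.rpow_one] at h2
    rw [h2]
    have h3 : ∀ i, ‖(F x - F y) i‖
        = |RTE.fcoord (ρ := ρ) (u := u) x i - RTE.fcoord (ρ := ρ) (u := u) y i| := by
      intro i
      rw [lp.coeFn_sub]
      simp only [Pi.sub_apply, Real.norm_eq_abs]
      rfl
    rw [tsum_congr h3]
    exact (RTE.abs_fcoord_hasSum hT hu x y).tsum_eq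
  have hisom : Isometry F := Isometry.of_dist_eq hFdist
  have hFρ : F ρ = 0 := by
    apply lp.ext
    funext n
    show RTE.fcoord (ρ := ρ) (u := u) ρ n = (0 : ∀ _ : ℕ, ℝ) n
    rw [RTE.fcoord_root hu n]
    rfl
  refine ⟨⟨F, hisom, hFρ⟩, ?_⟩
  let e : T ≃ᵢ Set.range F := hisom.isometryEquivOnRange
  have h0mem : (0 : ellOne) ∈ Set.range F := ⟨ρ, hFρ⟩
  have hcomplete : IsComplete (Set.range F) := hisom.isUniformInducing.isComplete_range
  haveI hlc : LocallyCompactSpace (Set.range F) :=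
    (Homeomorph.locallyCompactSpace_iff e.toHomeomorph).1 inferInstance
  have htree : IsRealTree (Set.range F) := RTE.isRealTree_transfer e hT
  refine ⟨⟨Set.range F, h0mem, hcomplete, hlc, htree⟩, ⟨e, e.isometry, e.bijective, ?_⟩⟩
  apply Subtype.ext
  show F ρ = 0
  exact hFρ

end
end

section
/- Let ψ be a branching mechanism and let q > 0 with λ := ψ(q) > 0. Then ψ'(q) > 0, and the numbers ξ_λ(0) = λ/(q ψ'(q)), ξ_λ(1) = 0, and ξ_λ(k) = q^{k−1} |ψ^{(k)}(q)| / (k! ψ'(q)) for k ≥ 2, are nonnegative, satisfy Σ_{k≥0} ξ_λ(k) = 1 (in particular the series Σ_{k≥2} q^k |ψ^{(k)}(q)|/k! converges), and the generating function of ξ_λ is φ_λ(s) = Σ_{k≥0} ξ_λ(k) s^k = s + ψ((1−s)q)/(q ψ'(q)) for every s ∈ [0,1]. -/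
open MeasureTheory Real Nat

lemma exp_tsum (u : ℝ) : Real.exp u = ∑' n : ℕ, u ^ n / (n ! : ℝ) := by
  rw [Real.exp_eq_exp_ℝ, NormedSpace.exp_eq_tsum_div]

lemma summable_tail (u : ℝ) : Summable (fun k : ℕ => u ^ (k + 2) / ((k + 2)! : ℝ)) :=
  (_root_.summable_nat_add_iff 2).mpr (Real.summable_pow_div_factorial u)

lemma tsum_tail (u : ℝ) : ∑' k : ℕ, u ^ (k + 2) / ((k + 2)! : ℝ) = Real.exp u - 1 - u := by
  have h := Summable.sum_add_tsum_nat_add (f := fun n : ℕ => u ^ n / (n ! : ℝ)) 2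
    (Real.summable_pow_div_factorial u)
  rw [← exp_tsum] at h
  have : ∑ i ∈ Finset.range 2, u ^ i / (i ! : ℝ) = 1 + u := by
    simp [Finset.sum_range_succ]
  rw [this] at h
  have h2 : ∑' k : ℕ, u ^ (k + 2) / (((k + 2)! : ℝ) : ℝ) = Real.exp u - (1 + u) := by
    linarith [h]
  rw [h2]; ring

lemma pow_div_factorial_le_exp (u : ℝ) (hu : 0 ≤ u) (k : ℕ) : u ^ k / (k ! : ℝ) ≤ Real.exp u := by
  rw [exp_tsum]
  exact Summable.le_tsum (Real.summable_pow_div_factorial u) k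
    (fun j _ => by positivity)

lemma exp_sub_one_sub_nonneg (u : ℝ) : 0 ≤ Real.exp u - 1 - u := by
  nlinarith [Real.add_one_le_exp u]

lemma exp_neg_sub_le_half_sq (t : ℝ) (ht : 0 ≤ t) : Real.exp (-t) - 1 + t ≤ t ^ 2 / 2 := by
  set f : ℝ → ℝ := fun t => 1 - t + t ^ 2 / 2 - Real.exp (-t) with hf
  have hd : ∀ u : ℝ, HasDerivAt f (-1 + u + Real.exp (-u)) u := by
    intro u
    have h1 : HasDerivAt (fun t : ℝ => Real.exp (-t)) (-Real.exp (-u)) u := by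
      exact ((Real.hasDerivAt_exp (-u)).comp u (hasDerivAt_neg u)).congr_deriv (by ring)
    have h2 : HasDerivAt (fun t : ℝ => 1 - t + t ^ 2 / 2) (-1 + u) u := by
      have := ((hasDerivAt_id u).const_sub 1).add ((hasDerivAt_pow 2 u).div_const 2)
      exact this.congr_deriv (Eq.symm (by push_cast; ring))
    exact (h2.sub h1).congr_deriv (by ring)
  have hmono : MonotoneOn f (Set.Ici 0) := by
    apply monotoneOn_of_deriv_nonneg (convex_Ici 0)
    · exact (Continuous.sub (by continuity) (by continuity)).continuousOn
    · intro u hu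
      exact ((hd u).differentiableAt).differentiableWithinAt
    · intro u hu
      rw [(hd u).deriv]
      nlinarith [Real.add_one_le_exp (-u)]
  have h0 : f 0 = 0 := by simp [hf]
  have := hmono (Set.self_mem_Ici) (Set.mem_Ici.mpr ht) ht
  rw [h0] at this
  simp only [hf] at this
  nlinarith [this]

lemma exp_sub_le (u : ℝ) (hu : 0 ≤ u) : Real.exp u - 1 - u ≤ u ^ 2 / 2 * Real.exp u := by
  rw [← tsum_tail]
  have hsum2 : Summable (fun k : ℕ => u ^ 2 / 2 * (u ^ k / (k ! : ℝ))) :=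
    (Real.summable_pow_div_factorial u).mul_left _
  have hle : ∀ k : ℕ, u ^ (k + 2) / ((k + 2)! : ℝ) ≤ u ^ 2 / 2 * (u ^ k / (k ! : ℝ)) := by
    intro k
    have h1n : 2 * k ! ≤ (k + 2)! := by
      rw [Nat.factorial_succ, Nat.factorial_succ]
      calc 2 * k ! = 2 * (1 * k !) := by ring
        _ ≤ (k + 1 + 1) * ((k + 1) * k !) :=
          Nat.mul_le_mul (by omega) (Nat.mul_le_mul (by omega) le_rfl)
    have h1 : (2 : ℝ) * (k ! : ℝ) ≤ ((k + 2)! : ℝ) := by exact_mod_cast h1n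
    have hfpos : (0:ℝ) < (k ! : ℝ) := Nat.cast_pos.mpr (Nat.factorial_pos k)
    have hfpos2 : (0:ℝ) < ((k + 2)! : ℝ) := Nat.cast_pos.mpr (Nat.factorial_pos (k+2))
    rw [div_le_iff₀ hfpos2]
    have heq : u ^ 2 / 2 * (u ^ k / (k ! : ℝ)) * ((k + 2)! : ℝ)
        = (u ^ 2 * u ^ k) * (((k + 2)! : ℝ) / (2 * (k ! : ℝ))) := by
      field_simp
    have hge : (1 : ℝ) ≤ ((k + 2)! : ℝ) / (2 * (k ! : ℝ)) :=
      (one_le_div (by positivity)).mpr (by linarith)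
    have h3 : u ^ 2 * u ^ k * 1 ≤ (u ^ 2 * u ^ k) * (((k + 2)! : ℝ) / (2 * (k ! : ℝ))) :=
      mul_le_mul_of_nonneg_left hge (by positivity)
    rw [heq]
    calc u ^ (k + 2) = u ^ 2 * u ^ k * 1 := by ring
      _ ≤ _ := h3
  calc ∑' k : ℕ, u ^ (k + 2) / ((k + 2)! : ℝ) ≤ ∑' k : ℕ, u ^ 2 / 2 * (u ^ k / (k ! : ℝ)) :=
        Summable.tsum_le_tsum hle (summable_tail u) hsum2
    _ = u ^ 2 / 2 * ∑' k : ℕ, u ^ k / (k ! : ℝ) := tsum_mul_left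
    _ = u ^ 2 / 2 * Real.exp u := by rw [← exp_tsum]

noncomputable section

/-- Integrand of the Lévy part of a branching mechanism. -/
def Gint (c x : ℝ) : ℝ := Real.exp (-(c * x)) - 1 + (if x < 1 then c * x else 0)

/-- Integrand of the first derivative. -/
def G1int (c x : ℝ) : ℝ := (if x < 1 then x else 0) - x * Real.exp (-(c * x))

/-- Integrand `x^k e^{-cx}` of higher derivatives. -/
def Dint (k : ℕ) (c x : ℝ) : ℝ := x ^ k * Real.exp (-(c * x))

def Gf (ν : Measure ℝ) (c : ℝ) : ℝ := ∫ x, Gint c x ∂ν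
def G1f (ν : Measure ℝ) (c : ℝ) : ℝ := ∫ x, G1int c x ∂ν
def Df (ν : Measure ℝ) (k : ℕ) (c : ℝ) : ℝ := ∫ x, Dint k c x ∂ν

/-- The ladder of derivatives of `ψ`. -/
def Pl (α β : ℝ) (ν : Measure ℝ) : ℕ → ℝ → ℝ
  | 0 => fun c => α * c + β * c ^ 2 + Gf ν c
  | 1 => fun c => α + 2 * β * c + G1f ν c
  | 2 => fun c => 2 * β + Df ν 2 c
  | (k + 3) => fun c => (-1 : ℝ) ^ (k + 3) * Df ν (k + 3) c

end

section MeasureStuff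

variable {ν : Measure ℝ}

lemma ae_pos (hν0 : ν (Set.Iic 0) = 0) : ∀ᵐ x ∂ν, 0 < x := by
  rw [ae_iff]
  convert hν0 using 2
  ext x; simp [not_lt]

lemma min_integrable (hν2 : (∫⁻ x, ENNReal.ofReal (min 1 (x ^ 2)) ∂ν) < ⊤) :
    Integrable (fun x => min 1 (x ^ 2)) ν := by
  refine ⟨(continuous_const.min (continuous_pow 2)).aestronglyMeasurable, ?_⟩
  rw [hasFiniteIntegral_iff_ofReal (Filter.Eventually.of_forall fun x =>
    le_min zero_le_one (sq_nonneg x))]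
  exact hν2

lemma integrable_of_min_bound (hν0 : ν (Set.Iic 0) = 0)
    (hν2 : (∫⁻ x, ENNReal.ofReal (min 1 (x ^ 2)) ∂ν) < ⊤)
    {g : ℝ → ℝ} (hg : AEStronglyMeasurable g ν) {C : ℝ}
    (h : ∀ x, 0 < x → |g x| ≤ C * min 1 (x ^ 2)) : Integrable g ν := by
  refine Integrable.mono' ((min_integrable hν2).const_mul C) hg ?_
  filter_upwards [ae_pos hν0] with x hx
  simpa using h x hx

lemma one_sub_exp_neg_le (u : ℝ) : 1 - Real.exp (-u) ≤ u := by
  nlinarith [Real.add_one_le_exp (-u)]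

lemma Gint_abs_le {c x : ℝ} (hc : 0 ≤ c) (hx : 0 < x) :
    |Gint c x| ≤ max 1 (c ^ 2 / 2) * min 1 (x ^ 2) := by
  unfold Gint
  by_cases h : x < 1
  · rw [if_pos h, min_eq_right (by nlinarith : x ^ 2 ≤ 1)]
    have h0 : 0 ≤ Real.exp (-(c * x)) - 1 + c * x := by
      nlinarith [Real.add_one_le_exp (-(c * x))]
    have h1 : Real.exp (-(c * x)) - 1 + c * x ≤ (c * x) ^ 2 / 2 :=
      exp_neg_sub_le_half_sq (c * x) (by positivity)
    rw [abs_of_nonneg h0]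
    nlinarith [le_max_right (1 : ℝ) (c ^ 2 / 2), sq_nonneg x, sq_nonneg (c * x)]
  · push_neg at h
    rw [if_neg (not_lt.mpr h), add_zero, min_eq_left (by nlinarith : (1:ℝ) ≤ x ^ 2)]
    have h2 : Real.exp (-(c * x)) ≤ 1 := Real.exp_le_one_iff.mpr (by nlinarith)
    have h3 : 0 < Real.exp (-(c * x)) := Real.exp_pos _
    rw [abs_of_nonpos (by linarith)]
    calc -(Real.exp (-(c * x)) - 1) ≤ 1 := by linarith
      _ ≤ max 1 (c ^ 2 / 2) * 1 := by rw [mul_one]; exact le_max_left _ _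

lemma Dint_le_global {k : ℕ} {a c x : ℝ} (ha : 0 < a) (hac : a ≤ c) (hx : 0 ≤ x) :
    Dint k c x ≤ (k ! : ℝ) / a ^ k := by
  unfold Dint
  have h1 : (a * x) ^ k / (k ! : ℝ) ≤ Real.exp (a * x) :=
    _root_.pow_div_factorial_le_exp (a * x) (by positivity) k
  have hfpos : (0:ℝ) < (k ! : ℝ) := Nat.cast_pos.mpr (Nat.factorial_pos k)
  have h2 : x ^ k ≤ (k ! : ℝ) / a ^ k * Real.exp (a * x) := by
    rw [div_le_iff₀ hfpos, mul_pow] at h1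
    rw [div_mul_eq_mul_div, le_div_iff₀ (by positivity)]
    calc x ^ k * a ^ k = a ^ k * x ^ k := by ring
      _ ≤ Real.exp (a * x) * (k ! : ℝ) := h1
      _ = (k ! : ℝ) * Real.exp (a * x) := by ring
  have h3 : Real.exp (-(c * x)) ≤ Real.exp (-(a * x)) :=
    Real.exp_le_exp.mpr (by nlinarith)
  calc x ^ k * Real.exp (-(c * x)) ≤ x ^ k * Real.exp (-(a * x)) :=
        mul_le_mul_of_nonneg_left h3 (by positivity)
    _ ≤ ((k ! : ℝ) / a ^ k * Real.exp (a * x)) * Real.exp (-(a * x)) :=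
        mul_le_mul_of_nonneg_right h2 (Real.exp_pos _).le
    _ = (k ! : ℝ) / a ^ k := by rw [mul_assoc, ← Real.exp_add]; simp

lemma Dint_nonneg {k : ℕ} {c x : ℝ} (hx : 0 ≤ x) : 0 ≤ Dint k c x := by
  unfold Dint; positivity

lemma Dint_abs_le {k : ℕ} {a c x : ℝ} (hk : 2 ≤ k) (ha : 0 < a) (hac : a ≤ c)
    (hx : 0 < x) : |Dint k c x| ≤ max 1 ((k ! : ℝ) / a ^ k) * min 1 (x ^ 2) := by
  rw [abs_of_nonneg (Dint_nonneg hx.le)]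
  by_cases h : x < 1
  · rw [min_eq_right (by nlinarith : x ^ 2 ≤ 1)]
    have h1 : x ^ k ≤ x ^ 2 := pow_le_pow_of_le_one hx.le h.le hk
    have h2 : Real.exp (-(c * x)) ≤ 1 := Real.exp_le_one_iff.mpr (by nlinarith)
    have : Dint k c x ≤ x ^ 2 := by
      unfold Dint
      calc x ^ k * Real.exp (-(c * x)) ≤ x ^ k * 1 :=
            mul_le_mul_of_nonneg_left h2 (by positivity)
        _ ≤ x ^ 2 := by rw [mul_one]; exact h1
    nlinarith [le_max_left (1:ℝ) ((k ! : ℝ) / a ^ k), sq_nonneg x]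
  · rw [min_eq_left (by nlinarith [not_lt.mp h] : (1:ℝ) ≤ x ^ 2)]
    calc Dint k c x ≤ (k ! : ℝ) / a ^ k := Dint_le_global ha hac hx.le
      _ ≤ max 1 ((k ! : ℝ) / a ^ k) * 1 := by
          rw [mul_one]; exact le_max_right _ _

lemma G1int_abs_le {a T c x : ℝ} (ha : 0 < a) (hac : a ≤ c) (hcT : c ≤ T)
    (hx : 0 < x) : |G1int c x| ≤ max T (1 / a) * min 1 (x ^ 2) := by
  unfold G1int
  by_cases h : x < 1
  · rw [if_pos h, min_eq_right (by nlinarith : x ^ 2 ≤ 1)]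
    have h2 : Real.exp (-(c * x)) ≤ 1 := Real.exp_le_one_iff.mpr (by nlinarith)
    have h1 : 1 - Real.exp (-(c * x)) ≤ c * x := one_sub_exp_neg_le (c * x)
    have h0 : 0 ≤ x - x * Real.exp (-(c * x)) := by nlinarith
    rw [abs_of_nonneg h0]
    have : x - x * Real.exp (-(c * x)) ≤ T * x ^ 2 := by nlinarith
    nlinarith [le_max_left T (1 / a), sq_nonneg x]
  · rw [if_neg h, min_eq_left (by nlinarith [not_lt.mp h] : (1:ℝ) ≤ x ^ 2), zero_sub,
      abs_neg, abs_of_nonneg (by positivity : (0:ℝ) ≤ x * Real.exp (-(c * x)))]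
    have := Dint_le_global (k := 1) ha hac hx.le
    unfold Dint at this
    rw [pow_one, pow_one] at this
    calc x * Real.exp (-(c * x)) ≤ (1 ! : ℝ) / a := this
      _ = 1 / a := by norm_num
      _ ≤ max T (1 / a) * 1 := by rw [mul_one]; exact le_max_right _ _

end MeasureStuff

section Deriv

variable {ν : Measure ℝ}

lemma Gint_meas (c : ℝ) : AEStronglyMeasurable (Gint c) ν := by
  unfold Gint
  apply Measurable.aestronglyMeasurable
  exact (((Real.measurable_exp.comp (measurable_id.const_mul c).neg)).sub
    measurable_const).add (Measurable.ite measurableSet_Iio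
      (measurable_id.const_mul c) measurable_const)

lemma G1int_meas (c : ℝ) : AEStronglyMeasurable (G1int c) ν := by
  unfold G1int
  apply Measurable.aestronglyMeasurable
  exact (Measurable.ite measurableSet_Iio measurable_id measurable_const).sub
    (measurable_id.mul (Real.measurable_exp.comp (measurable_id.const_mul c).neg))

lemma Dint_meas (k : ℕ) (c : ℝ) : AEStronglyMeasurable (Dint k c) ν := by
  unfold Dint
  exact ((measurable_id.pow_const k).mul
    (Real.measurable_exp.comp (measurable_id.const_mul c).neg)).aestronglyMeasurable

variable (hν0 : ν (Set.Iic 0) = 0)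
  (hν2 : (∫⁻ x, ENNReal.ofReal (min 1 (x ^ 2)) ∂ν) < ⊤)
include hν0 hν2

lemma Gint_integrable {c : ℝ} (hc : 0 ≤ c) : Integrable (Gint c) ν :=
  integrable_of_min_bound hν0 hν2 (Gint_meas c) (fun x hx => Gint_abs_le hc hx)

lemma G1int_integrable {c : ℝ} (hc : 0 < c) : Integrable (G1int c) ν :=
  integrable_of_min_bound hν0 hν2 (G1int_meas c)
    (fun x hx => G1int_abs_le hc le_rfl le_rfl hx)

lemma Dint_integrable {k : ℕ} (hk : 2 ≤ k) {c : ℝ} (hc : 0 < c) :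
    Integrable (Dint k c) ν :=
  integrable_of_min_bound hν0 hν2 (Dint_meas k c)
    (fun x hx => Dint_abs_le hk hc le_rfl hx)

omit hν0 hν2

lemma hasDerivAt_exp_neg_mul (x c : ℝ) :
    HasDerivAt (fun c => Real.exp (-(c * x))) (-(x * Real.exp (-(c * x)))) c := by
  have h1 : HasDerivAt (fun c : ℝ => -(c * x)) (-x) c := (hasDerivAt_mul_const x).neg
  have := (Real.hasDerivAt_exp (-(c * x))).comp c h1
  exact this.congr_deriv (Eq.symm (by ring))

lemma hasDerivAt_Gint (x c : ℝ) : HasDerivAt (fun c => Gint c x) (G1int c x) c := by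
  have heq : (fun c => Gint c x)
      = fun c => Real.exp (-(c * x)) - 1 + c * (if x < 1 then x else 0) := by
    funext c; unfold Gint; split_ifs <;> ring
  rw [heq]
  have := ((hasDerivAt_exp_neg_mul x c).sub_const 1).add
    (hasDerivAt_mul_const (if x < 1 then x else 0))
  exact this.congr_deriv (Eq.symm (by unfold G1int; ring))

lemma hasDerivAt_G1int (x c : ℝ) : HasDerivAt (fun c => G1int c x) (Dint 2 c x) c := by
  unfold G1int
  have := (hasDerivAt_const c (if x < 1 then x else 0)).sub
    ((hasDerivAt_exp_neg_mul x c).const_mul x)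
  exact this.congr_deriv (Eq.symm (by unfold Dint; ring))

lemma hasDerivAt_Dint (k : ℕ) (x c : ℝ) :
    HasDerivAt (fun c => Dint k c x) (-(Dint (k + 1) c x)) c := by
  unfold Dint
  have := (hasDerivAt_exp_neg_mul x c).const_mul (x ^ k)
  exact this.congr_deriv (Eq.symm (by rw [pow_succ]; ring))

lemma ball_bounds {c t : ℝ} (hc : 0 < c) (ht : t ∈ Metric.ball c (c / 2)) :
    c / 2 ≤ t ∧ t ≤ 3 * c / 2 := by
  rw [Metric.mem_ball, Real.dist_eq, abs_sub_lt_iff] at ht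
  constructor <;> linarith [ht.1, ht.2]

include hν0 hν2

lemma hasDerivAt_Gf {c : ℝ} (hc : 0 < c) : HasDerivAt (Gf ν) (G1f ν c) c := by
  have key := hasDerivAt_integral_of_dominated_loc_of_deriv_le (μ := ν)
    (F := fun c x => Gint c x) (F' := fun c x => G1int c x) (x₀ := c)
    (bound := fun x => max (3 * c / 2) (1 / (c / 2)) * min 1 (x ^ 2))
    (Metric.ball_mem_nhds c (by positivity : (0:ℝ) < c / 2))
    (Filter.Eventually.of_forall fun t => Gint_meas t)
    (Gint_integrable hν0 hν2 hc.le) (G1int_meas c)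
    ?_ ((min_integrable hν2).const_mul _)
    (Filter.Eventually.of_forall fun x t _ => hasDerivAt_Gint x t)
  · exact key.2
  · filter_upwards [ae_pos hν0] with x hx
    intro t ht
    obtain ⟨h1, h2⟩ := ball_bounds hc ht
    rw [Real.norm_eq_abs]
    exact G1int_abs_le (by positivity) h1 h2 hx

lemma hasDerivAt_G1f {c : ℝ} (hc : 0 < c) : HasDerivAt (G1f ν) (Df ν 2 c) c := by
  have key := hasDerivAt_integral_of_dominated_loc_of_deriv_le (μ := ν)
    (F := fun c x => G1int c x) (F' := fun c x => Dint 2 c x) (x₀ := c)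
    (bound := fun x => max 1 ((2 ! : ℝ) / (c / 2) ^ 2) * min 1 (x ^ 2))
    (Metric.ball_mem_nhds c (by positivity : (0:ℝ) < c / 2))
    (Filter.Eventually.of_forall fun t => G1int_meas t)
    (G1int_integrable hν0 hν2 hc) (Dint_meas 2 c)
    ?_ ((min_integrable hν2).const_mul _)
    (Filter.Eventually.of_forall fun x t _ => hasDerivAt_G1int x t)
  · exact key.2
  · filter_upwards [ae_pos hν0] with x hx
    intro t ht
    rw [Real.norm_eq_abs]
    exact Dint_abs_le le_rfl (by positivity) (ball_bounds hc ht).1 hx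

lemma hasDerivAt_Df {k : ℕ} (hk : 2 ≤ k) {c : ℝ} (hc : 0 < c) :
    HasDerivAt (Df ν k) (-(Df ν (k + 1) c)) c := by
  have key := hasDerivAt_integral_of_dominated_loc_of_deriv_le (μ := ν)
    (F := fun c x => Dint k c x) (F' := fun c x => -(Dint (k + 1) c x)) (x₀ := c)
    (bound := fun x => max 1 (((k + 1)! : ℝ) / (c / 2) ^ (k + 1)) * min 1 (x ^ 2))
    (Metric.ball_mem_nhds c (by positivity : (0:ℝ) < c / 2))
    (Filter.Eventually.of_forall fun t => Dint_meas k t)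
    (Dint_integrable hν0 hν2 hk hc) ((Dint_meas (k + 1) c).neg)
    ?_ ((min_integrable hν2).const_mul _)
    (Filter.Eventually.of_forall fun x t _ => hasDerivAt_Dint k x t)
  · have h2 := key.2
    have : (∫ x, -(Dint (k + 1) c x) ∂ν) = -(Df ν (k + 1) c) := by
      rw [integral_neg]; rfl
    rwa [this] at h2
  · filter_upwards [ae_pos hν0] with x hx
    intro t ht
    rw [norm_neg, Real.norm_eq_abs]
    exact Dint_abs_le (by omega) (by positivity) (ball_bounds hc ht).1 hx

end Deriv

section Ladder

variable {ν : Measure ℝ} (α β : ℝ)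
variable (hν0 : ν (Set.Iic 0) = 0)
  (hν2 : (∫⁻ x, ENNReal.ofReal (min 1 (x ^ 2)) ∂ν) < ⊤)
include hν0 hν2

lemma Pl_hasDerivAt (n : ℕ) {c : ℝ} (hc : 0 < c) :
    HasDerivAt (Pl α β ν n) (Pl α β ν (n + 1) c) c := by
  obtain _ | _ | _ | k := n
  · show HasDerivAt (fun c => α * c + β * c ^ 2 + Gf ν c)
      (α + 2 * β * c + G1f ν c) c
    have h1 : HasDerivAt (fun c : ℝ => α * c + β * c ^ 2) (α + 2 * β * c) c := by
      have := ((hasDerivAt_id c).const_mul α).add ((hasDerivAt_pow 2 c).const_mul β)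
      exact this.congr_deriv (Eq.symm (by push_cast; ring))
    exact h1.add (hasDerivAt_Gf hν0 hν2 hc)
  · show HasDerivAt (fun c => α + 2 * β * c + G1f ν c) (2 * β + Df ν 2 c) c
    have h1 : HasDerivAt (fun c : ℝ => α + 2 * β * c) (2 * β) c := by
      have := (hasDerivAt_const c α).add ((hasDerivAt_id c).const_mul (2 * β))
      exact this.congr_deriv (Eq.symm (by ring))
    exact h1.add (hasDerivAt_G1f hν0 hν2 hc)
  · show HasDerivAt (fun c => 2 * β + Df ν 2 c) ((-1 : ℝ) ^ (0 + 3) * Df ν (0 + 3) c) c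
    have := (hasDerivAt_const c (2 * β)).add (hasDerivAt_Df hν0 hν2 le_rfl hc)
    exact this.congr_deriv (Eq.symm (by norm_num))
  · show HasDerivAt (fun c => (-1 : ℝ) ^ (k + 3) * Df ν (k + 3) c)
      ((-1 : ℝ) ^ (k + 4) * Df ν (k + 4) c) c
    have := (hasDerivAt_Df hν0 hν2 (by omega : 2 ≤ k + 3) hc).const_mul ((-1 : ℝ) ^ (k + 3))
    exact this.congr_deriv (Eq.symm (by
      rw [show k + 4 = (k + 3) + 1 from rfl, pow_succ]
      ring))

lemma iteratedDeriv_Pl (n : ℕ) : ∀ {c : ℝ}, 0 < c →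
    iteratedDeriv n (Pl α β ν 0) c = Pl α β ν n c := by
  induction n with
  | zero => intro c _; simp [iteratedDeriv_zero]
  | succ n ih =>
    intro c hc
    rw [iteratedDeriv_succ]
    have hev : iteratedDeriv n (Pl α β ν 0) =ᶠ[nhds c] Pl α β ν n := by
      filter_upwards [isOpen_Ioi.mem_nhds (Set.mem_Ioi.mpr hc)] with y hy
      exact ih hy
    rw [hev.deriv_eq, (Pl_hasDerivAt α β hν0 hν2 n hc).deriv]

omit hν2

lemma Df_nonneg (k : ℕ) (c : ℝ) : 0 ≤ Df ν k c :=
  integral_nonneg_of_ae ((ae_pos hν0).mono fun _ hx => Dint_nonneg hx.le)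

end Ladder

/-- The remainder integrand. -/
noncomputable def Rint (q s x : ℝ) : ℝ :=
  Real.exp (-(q * x)) * (Real.exp (s * q * x) - 1 - s * q * x)

lemma Rint_nonneg (q s x : ℝ) : 0 ≤ Rint q s x :=
  mul_nonneg (Real.exp_pos _).le (exp_sub_one_sub_nonneg _)

lemma Rint_eq (q s x : ℝ) :
    Gint ((1 - s) * q) x - Gint q x + s * q * G1int q x = Rint q s x := by
  unfold Gint G1int Rint
  have hexp : Real.exp (-((1 - s) * q * x)) = Real.exp (-(q * x)) * Real.exp (s * q * x) := by
    rw [← Real.exp_add]; ring_nf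
  split_ifs <;> rw [hexp] <;> ring

section Star

variable {ν : Measure ℝ}
variable (hν0 : ν (Set.Iic 0) = 0)
  (hν2 : (∫⁻ x, ENNReal.ofReal (min 1 (x ^ 2)) ∂ν) < ⊤)
include hν0 hν2

lemma Rint_integrable {q s : ℝ} (hq : 0 < q) (hs0 : 0 ≤ s) (hs1 : s ≤ 1) :
    Integrable (Rint q s) ν := by
  have h1 : Integrable (Gint ((1 - s) * q)) ν :=
    Gint_integrable hν0 hν2 (by nlinarith)
  have h2 := Gint_integrable hν0 hν2 hq.le
  have h3 := (G1int_integrable hν0 hν2 hq).const_mul (s * q)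
  have hcomb : Integrable (fun x => Gint ((1 - s) * q) x - Gint q x + s * q * G1int q x) ν :=
    (h1.sub h2).add h3
  have hfun : (fun x => Gint ((1 - s) * q) x - Gint q x + s * q * G1int q x) = Rint q s :=
    funext fun x => Rint_eq q s x
  rwa [hfun] at hcomb

lemma star (α β : ℝ) {q s : ℝ} (hq : 0 < q) (hs0 : 0 ≤ s) (hs1 : s ≤ 1) :
    Pl α β ν 0 ((1 - s) * q) - Pl α β ν 0 q + s * q * Pl α β ν 1 q
      = β * q ^ 2 * s ^ 2 + ∫ x, Rint q s x ∂ν := by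
  have h1 : Integrable (Gint ((1 - s) * q)) ν :=
    Gint_integrable hν0 hν2 (by nlinarith)
  have h2 := Gint_integrable hν0 hν2 hq.le
  have h3 := (G1int_integrable hν0 hν2 hq).const_mul (s * q)
  have hfun : (fun x => Gint ((1 - s) * q) x - Gint q x + s * q * G1int q x) = Rint q s :=
    funext fun x => Rint_eq q s x
  have h12 : Integrable (fun x => Gint ((1 - s) * q) x - Gint q x) ν := h1.sub h2
  have h3' : Integrable (fun x => s * q * G1int q x) ν := h3
  have hint : ∫ x, (Gint ((1 - s) * q) x - Gint q x + s * q * G1int q x) ∂ν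
      = Gf ν ((1 - s) * q) - Gf ν q + s * q * G1f ν q := by
    rw [integral_add h12 h3', integral_sub h1 h2, integral_const_mul]; rfl
  have key : Gf ν ((1 - s) * q) - Gf ν q + s * q * G1f ν q = ∫ x, Rint q s x ∂ν := by
    rw [← hint]
    exact congrArg (fun f => ∫ x, f x ∂ν) hfun
  have hPl : Pl α β ν 0 ((1 - s) * q) - Pl α β ν 0 q + s * q * Pl α β ν 1 q
      = β * q ^ 2 * s ^ 2 + (Gf ν ((1 - s) * q) - Gf ν q + s * q * G1f ν q) := by
    simp only [Pl]; ring
  rw [hPl, key]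

lemma tonelli {q s : ℝ} (hq : 0 < q) (hs0 : 0 ≤ s) (hs1 : s ≤ 1) :
    Summable (fun k : ℕ => (s * q) ^ (k + 2) / ((k + 2)! : ℝ) * Df ν (k + 2) q) ∧
    ∑' k : ℕ, (s * q) ^ (k + 2) / ((k + 2)! : ℝ) * Df ν (k + 2) q
      = ∫ x, Rint q s x ∂ν := by
  set a : ℕ → ℝ := fun k => (s * q) ^ (k + 2) / ((k + 2)! : ℝ) * Df ν (k + 2) q with ha
  have hsq : 0 ≤ s * q := by positivity
  have hane : ∀ k, 0 ≤ a k := fun k =>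
    mul_nonneg (by positivity) (Df_nonneg hν0 _ _)
  have hf_int : ∀ k : ℕ,
      Integrable (fun x => (s * q) ^ (k + 2) / ((k + 2)! : ℝ) * Dint (k + 2) q x) ν :=
    fun k => (Dint_integrable hν0 hν2 (by omega) hq).const_mul _
  have hR := Rint_integrable hν0 hν2 hq hs0 hs1
  have hmeas : ∀ k : ℕ, Measurable (Dint (k + 2) q) := fun k =>
    (measurable_id.pow_const (k + 2)).mul
      (Real.measurable_exp.comp (measurable_id.const_mul q).neg)
  have step1 : ∀ k, ENNReal.ofReal (a k)
      = ∫⁻ x, ENNReal.ofReal ((s * q) ^ (k + 2) / ((k + 2)! : ℝ) * Dint (k + 2) q x) ∂ν := by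
    intro k
    have : a k = ∫ x, (s * q) ^ (k + 2) / ((k + 2)! : ℝ) * Dint (k + 2) q x ∂ν := by
      rw [integral_const_mul]; rfl
    rw [this]
    exact ofReal_integral_eq_lintegral_ofReal (hf_int k)
      ((ae_pos hν0).mono fun x hx =>
        mul_nonneg (by positivity) (Dint_nonneg hx.le))
  have step2 : ∑' k, ENNReal.ofReal (a k)
      = ∫⁻ x, ∑' k, ENNReal.ofReal ((s * q) ^ (k + 2) / ((k + 2)! : ℝ) * Dint (k + 2) q x) ∂ν := by
    rw [lintegral_tsum (fun k => (((hmeas k).const_mul _).ennreal_ofReal).aemeasurable)]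
    exact tsum_congr step1
  have step3 : ∫⁻ x, ∑' k, ENNReal.ofReal ((s * q) ^ (k + 2) / ((k + 2)! : ℝ) * Dint (k + 2) q x) ∂ν
      = ∫⁻ x, ENNReal.ofReal (Rint q s x) ∂ν := by
    apply lintegral_congr_ae
    filter_upwards [ae_pos hν0] with x hx
    have hterm : ∀ k : ℕ, (s * q) ^ (k + 2) / ((k + 2)! : ℝ) * Dint (k + 2) q x
        = (s * q * x) ^ (k + 2) / ((k + 2)! : ℝ) * Real.exp (-(q * x)) := by
      intro k; unfold Dint; rw [mul_pow]; ring
    have hsum : Summable (fun k : ℕ => (s * q) ^ (k + 2) / ((k + 2)! : ℝ) * Dint (k + 2) q x) := by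
      refine ((summable_tail (s * q * x)).mul_right (Real.exp (-(q * x)))).congr fun k => ?_
      rw [hterm k]
    rw [← ENNReal.ofReal_tsum_of_nonneg
      (fun k => mul_nonneg (by positivity) (Dint_nonneg hx.le)) hsum]
    congr 1
    rw [tsum_congr hterm, tsum_mul_right, tsum_tail]
    unfold Rint; ring
  have step4 : ∫⁻ x, ENNReal.ofReal (Rint q s x) ∂ν
      = ENNReal.ofReal (∫ x, Rint q s x ∂ν) :=
    (ofReal_integral_eq_lintegral_ofReal hR
      (Filter.Eventually.of_forall fun x => Rint_nonneg q s x)).symm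
  have htot : ∑' k, ENNReal.ofReal (a k) = ENNReal.ofReal (∫ x, Rint q s x ∂ν) := by
    rw [step2, step3, step4]
  have hlt : ∑' k, ENNReal.ofReal (a k) ≠ ⊤ := by
    rw [htot]; exact ENNReal.ofReal_ne_top
  have hsa : Summable a := by
    refine (ENNReal.summable_toReal hlt).congr fun k => ?_
    rw [ENNReal.toReal_ofReal (hane k)]
  refine ⟨hsa, ?_⟩
  have h5 : ENNReal.ofReal (∑' k, a k) = ENNReal.ofReal (∫ x, Rint q s x ∂ν) := by
    rw [ENNReal.ofReal_tsum_of_nonneg hane hsa, htot]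
  exact (ENNReal.ofReal_eq_ofReal_iff (tsum_nonneg hane)
    (integral_nonneg fun x => Rint_nonneg q s x)).mp h5

end Star

/-- `ψ` is a branching mechanism with parameters `(α, β, ν)`:
`ψ(c) = αc + βc² + ∫ (e^{-cx} - 1 + cx 1_{x<1}) ν(dx)` for all `c ≥ 0`, where `β ≥ 0` and
`ν` is a measure on `(0,∞)` with `∫ min(1,x²) ν(dx) < ∞`. -/
def IsBMWith (ψ : ℝ → ℝ) (α β : ℝ) (ν : Measure ℝ) : Prop :=
  0 ≤ β ∧ ν (Set.Iic 0) = 0 ∧ (∫⁻ x, ENNReal.ofReal (min 1 (x ^ 2)) ∂ν) < ⊤ ∧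
    ∀ c : ℝ, 0 ≤ c →
      ψ c = α * c + β * c ^ 2
        + ∫ x, (Real.exp (-(c * x)) - 1 + (if x < 1 then c * x else 0)) ∂ν

/-- `ψ` is a branching mechanism: it is of Lévy–Khintchine form for some parameters. -/
def IsBranchingMechanism (ψ : ℝ → ℝ) : Prop :=
  ∃ (α β : ℝ) (ν : Measure ℝ), IsBMWith ψ α β ν

/-- The offspring distribution `ξ_λ` associated with a branching mechanism `ψ` at `q = ψ^{-1}(λ)`
(so that `λ = ψ(q)`). -/
noncomputable def xiL (ψ : ℝ → ℝ) (q : ℝ) : ℕ → ℝ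
  | 0 => ψ q / (q * derivWithin ψ (Set.Ioi 0) q)
  | 1 => 0
  | (k + 2) => q ^ (k + 1) * |iteratedDerivWithin (k + 2) ψ (Set.Ioi 0) q| /
      ((Nat.factorial (k + 2) : ℝ) * derivWithin ψ (Set.Ioi 0) q)

/-- For a branching mechanism `ψ` and `q > 0` with `λ = ψ(q) > 0`: `ψ'(q) > 0`, the family
`ξ_λ` is a probability distribution on `ℕ` (in particular the series
`Σ_{k≥2} q^k |ψ^{(k)}(q)|/k!` converges), and its generating function is
`φ_λ(s) = s + ψ((1-s)q)/(q ψ'(q))` on `[0,1]`. -/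
theorem xiL_prob_and_pgf (ψ : ℝ → ℝ) (hψ : IsBranchingMechanism ψ)
    (q : ℝ) (hq : 0 < q) (hl : 0 < ψ q) :
    0 < derivWithin ψ (Set.Ioi 0) q ∧
    (∀ k : ℕ, 0 ≤ xiL ψ q k) ∧
    Summable (fun k : ℕ =>
      q ^ (k + 2) * |iteratedDerivWithin (k + 2) ψ (Set.Ioi 0) q| /
        (Nat.factorial (k + 2) : ℝ)) ∧
    Summable (xiL ψ q) ∧ (∑' k : ℕ, xiL ψ q k) = 1 ∧
    ∀ s ∈ Set.Icc (0 : ℝ) 1,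
      (∑' k : ℕ, xiL ψ q k * s ^ k)
        = s + ψ ((1 - s) * q) / (q * derivWithin ψ (Set.Ioi 0) q) := by

  obtain ⟨α, β, ν, hβ, hν0, hν2, hform⟩ := hψ
  -- agreement of ψ with the ladder base
  have hagree : ∀ y : ℝ, 0 ≤ y → ψ y = Pl α β ν 0 y := fun y hy => by
    rw [hform y hy]; rfl
  have hev : ψ =ᶠ[nhds q] Pl α β ν 0 := by
    filter_upwards [isOpen_Ioi.mem_nhds (Set.mem_Ioi.mpr hq)] with y hy
    exact hagree y (le_of_lt hy)
  have hIter : ∀ n : ℕ, iteratedDerivWithin n ψ (Set.Ioi 0) q = Pl α β ν n q := by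
    intro n
    have h1 : iteratedDerivWithin n ψ (Set.Ioi 0) q = iteratedDeriv n ψ q := by
      rw [iteratedDerivWithin_eq_iteratedFDerivWithin,
        iteratedFDerivWithin_of_isOpen n isOpen_Ioi (Set.mem_Ioi.mpr hq),
        iteratedDeriv_eq_iteratedFDeriv]
    rw [h1, Filter.EventuallyEq.iteratedDeriv_eq n hev,
      iteratedDeriv_Pl α β hν0 hν2 n hq]
  have hD : derivWithin ψ (Set.Ioi 0) q = Pl α β ν 1 q := by
    rw [derivWithin_of_isOpen isOpen_Ioi (Set.mem_Ioi.mpr hq), hev.deriv_eq,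
      (Pl_hasDerivAt α β hν0 hν2 0 hq).deriv]
  set D : ℝ := Pl α β ν 1 q with hDdef
  -- ψ 0 = 0
  have hψ0 : ψ 0 = 0 := by
    rw [hform 0 le_rfl]
    norm_num
  -- star identity at s = 1
  have hstar1 := star hν0 hν2 α β hq zero_le_one le_rfl
  have h00 : Pl α β ν 0 ((1 - 1) * q) = 0 := by
    rw [show ((1 : ℝ) - 1) * q = 0 by ring, ← hagree 0 le_rfl, hψ0]
  have hPq : Pl α β ν 0 q = ψ q := (hagree q hq.le).symm
  have hkey1 : ∫ x, Rint q 1 x ∂ν = q * D - ψ q - β * q ^ 2 := by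
    rw [h00, hPq] at hstar1
    nlinarith [hstar1]
  have hRnn1 : 0 ≤ ∫ x, Rint q 1 x ∂ν := integral_nonneg fun x => Rint_nonneg q 1 x
  have hDpos : 0 < D := by nlinarith
  have hD0 : D ≠ 0 := ne_of_gt hDpos
  have hq0 : q ≠ 0 := ne_of_gt hq
  have hqD : 0 < q * D := by positivity
  -- absolute values of iterated derivatives
  have hAbs : ∀ k : ℕ, |iteratedDerivWithin (k + 2) ψ (Set.Ioi 0) q|
      = (if k = 0 then 2 * β + Df ν 2 q else Df ν (k + 2) q) := by
    intro k
    cases k with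
    | zero =>
      rw [hIter 2, if_pos rfl]
      have : Pl α β ν 2 q = 2 * β + Df ν 2 q := rfl
      rw [this, abs_of_nonneg (add_nonneg (by linarith) (Df_nonneg hν0 _ _))]
    | succ j =>
      rw [hIter (j + 1 + 2), if_neg (Nat.succ_ne_zero j)]
      have : Pl α β ν (j + 1 + 2) q = (-1 : ℝ) ^ (j + 3) * Df ν (j + 3) q := rfl
      rw [this, abs_mul, abs_pow, abs_neg, abs_one, one_pow, one_mul,
        abs_of_nonneg (Df_nonneg hν0 _ _)]
  -- main series
  set S : ℕ → ℝ := fun k => q ^ (k + 2) / ((k + 2)! : ℝ) * Df ν (k + 2) q with hSdef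
  have T1 := tonelli hν0 hν2 hq zero_le_one le_rfl
  simp only [one_mul] at T1
  have hfact2 : ((2 : ℕ)! : ℝ) = 2 := by norm_num [Nat.factorial]
  have hstmt_eq : (fun k : ℕ => q ^ (k + 2) * |iteratedDerivWithin (k + 2) ψ (Set.Ioi 0) q|
      / ((k + 2)! : ℝ)) = fun k => S k + if k = 0 then q ^ 2 * β else 0 := by
    funext k
    rw [hAbs k]
    cases k with
    | zero =>
      norm_num [hSdef, hfact2]
      ring
    | succ j =>
      simp only [if_neg (Nat.succ_ne_zero j), hSdef, add_zero]
      ring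
  have hS2 : Summable (fun k : ℕ => S k + if k = 0 then q ^ 2 * β else 0) :=
    T1.1.add (hasSum_ite_eq 0 (q ^ 2 * β)).summable
  have htsumS2 : ∑' k : ℕ, (S k + if k = 0 then q ^ 2 * β else 0)
      = (∫ x, Rint q 1 x ∂ν) + q ^ 2 * β := by
    rw [Summable.tsum_add T1.1 (hasSum_ite_eq 0 (q ^ 2 * β)).summable, T1.2, tsum_ite_eq]
  -- xiL tail formula
  have hxi2 : ∀ k : ℕ, xiL ψ q (k + 2)
      = (S k + if k = 0 then q ^ 2 * β else 0) / (q * D) := by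
    intro k
    show q ^ (k + 1) * |iteratedDerivWithin (k + 2) ψ (Set.Ioi 0) q| /
        (((k + 2)! : ℝ) * derivWithin ψ (Set.Ioi 0) q) = _
    rw [hAbs k, hD]
    cases k with
    | zero =>
      norm_num [hSdef, hfact2]
      field_simp
      ring
    | succ j =>
      have hF : ((j + 1 + 2)! : ℝ) ≠ 0 := Nat.cast_ne_zero.mpr (Nat.factorial_ne_zero _)
      simp only [if_neg (Nat.succ_ne_zero j), hSdef, add_zero]
      field_simp
      ring
  have hxi_sum : Summable (xiL ψ q) := by
    rw [← _root_.summable_nat_add_iff 2]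
    exact (hS2.div_const (q * D)).congr fun k => (hxi2 k).symm
  refine ⟨hD ▸ hDpos, ?_, ?_, hxi_sum, ?_, ?_⟩
  · -- nonnegativity
    intro k
    match k with
    | 0 =>
      show 0 ≤ ψ q / (q * derivWithin ψ (Set.Ioi 0) q)
      apply div_nonneg hl.le
      rw [hD]; positivity
    | 1 => exact le_rfl
    | (j + 2) =>
      show 0 ≤ q ^ (j + 1) * |iteratedDerivWithin (j + 2) ψ (Set.Ioi 0) q| /
        (((j + 2)! : ℝ) * derivWithin ψ (Set.Ioi 0) q)
      apply div_nonneg (mul_nonneg (by positivity) (abs_nonneg _))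
      rw [hD]
      positivity
  · -- summability of the statement series
    rw [hstmt_eq]; exact hS2
  · -- total mass one
    have htail := Summable.sum_add_tsum_nat_add 2 hxi_sum
    have hrange : ∑ i ∈ Finset.range 2, xiL ψ q i = ψ q / (q * D) := by
      rw [Finset.sum_range_succ, Finset.sum_range_one]
      show xiL ψ q 0 + xiL ψ q 1 = _
      have h0 : xiL ψ q 0 = ψ q / (q * derivWithin ψ (Set.Ioi 0) q) := rfl
      have h1 : xiL ψ q 1 = 0 := rfl
      rw [h0, h1, hD, add_zero]
    have htail2 : ∑' i : ℕ, xiL ψ q (i + 2)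
        = ((∫ x, Rint q 1 x ∂ν) + q ^ 2 * β) / (q * D) := by
      rw [tsum_congr hxi2, tsum_div_const, htsumS2]
    rw [← htail, hrange, htail2, hkey1]
    field_simp
    ring
  · -- generating function
    intro s hs
    obtain ⟨hs0, hs1⟩ := hs
    have Ts := tonelli hν0 hν2 hq hs0 hs1
    have hstars := star hν0 hν2 α β hq hs0 hs1
    have hsub : ((1 : ℝ) - s) * q ≥ 0 := by nlinarith
    rw [← hagree ((1 - s) * q) hsub, hPq] at hstars
    -- hstars : ψ ((1-s)*q)... in Pl form
    have hterm : ∀ k : ℕ, xiL ψ q (k + 2) * s ^ (k + 2)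
        = ((s * q) ^ (k + 2) / ((k + 2)! : ℝ) * Df ν (k + 2) q
            + if k = 0 then (s * q) ^ 2 * β else 0) / (q * D) := by
      intro k
      rw [hxi2 k]
      cases k with
      | zero =>
        norm_num [hSdef, hfact2]
        field_simp
      | succ j =>
        have hF : ((j + 1 + 2)! : ℝ) ≠ 0 := Nat.cast_ne_zero.mpr (Nat.factorial_ne_zero _)
        simp only [if_neg (Nat.succ_ne_zero j), hSdef, add_zero]
        field_simp
        ring
    have hsum_s : Summable (fun k : ℕ => xiL ψ q k * s ^ k) := by
      rw [← _root_.summable_nat_add_iff 2]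
      exact ((Ts.1.add (hasSum_ite_eq 0 ((s * q) ^ 2 * β)).summable).div_const
        (q * D)).congr fun k => (hterm k).symm
    have htail := Summable.sum_add_tsum_nat_add 2 hsum_s
    have hrange : ∑ i ∈ Finset.range 2, xiL ψ q i * s ^ i = ψ q / (q * D) := by
      rw [Finset.sum_range_succ, Finset.sum_range_one]
      have h0 : xiL ψ q 0 = ψ q / (q * derivWithin ψ (Set.Ioi 0) q) := rfl
      have h1 : xiL ψ q 1 = 0 := rfl
      rw [h0, h1, hD]
      ring
    have htail2 : ∑' i : ℕ, xiL ψ q (i + 2) * s ^ (i + 2)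
        = ((∫ x, Rint q s x ∂ν) + (s * q) ^ 2 * β) / (q * D) := by
      rw [tsum_congr hterm, tsum_div_const,
        Summable.tsum_add Ts.1 (hasSum_ite_eq 0 ((s * q) ^ 2 * β)).summable, Ts.2, tsum_ite_eq]
    rw [← hDdef] at hstars
    have hRs : ∫ x, Rint q s x ∂ν = ψ ((1 - s) * q) - ψ q + s * q * D - β * q ^ 2 * s ^ 2 := by
      linear_combination -hstars
    rw [← htail, hrange, htail2, hRs, hD]
    show ψ q / (q * D) + (ψ ((1 - s) * q) - ψ q + s * q * D - β * q ^ 2 * s ^ 2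
      + (s * q) ^ 2 * β) / (q * D) = s + ψ ((1 - s) * q) / (q * D)
    field_simp
    ring
end

section
/- Let ψ be a branching mechanism, strictly increasing on [γ,∞) with lim_{c→∞} ψ(c) = ∞, and let 0 ≤ μ ≤ λ with λ > 0. Set q = ψ^{-1}(λ), define φ_{0,λ}(s) = s + ψ( q − s(q − γ) ) / ( (q − γ) ψ'(q) ), g = 1 − (ψ^{-1}(μ) − γ)/(q − γ), and κ(s) = 1 − ( ψ^{-1}( ψ( (q − ψ^{-1}(μ))(1−s) + ψ^{-1}(μ) ) − μ ) − γ )/(q − γ) for s ∈ [0,1]. Then κ(s) ∈ [0,1] and φ_{0,λ}(κ(s)) − κ(s) = φ_{0,λ}(s g) − s g − ( φ_{0,λ}(g) − g ) for every s ∈ [0,1]. -/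
open MeasureTheory

/-- The generating function `φ_{0,λ}(s) = s + ψ(q - s(q-γ))/((q-γ)ψ'(q))`, with `q = ψ^{-1}(λ)`. -/
noncomputable def phi0L (ψ ψinv : ℝ → ℝ) (γ lam : ℝ) (s : ℝ) : ℝ :=
  s + ψ (ψinv lam - s * (ψinv lam - γ)) /
      ((ψinv lam - γ) * derivWithin ψ (Set.Ioi 0) (ψinv lam))

/-- `g = 1 - (ψ^{-1}(μ) - γ)/(ψ^{-1}(λ) - γ)`. -/
noncomputable def gML (ψinv : ℝ → ℝ) (γ μ lam : ℝ) : ℝ :=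
  1 - (ψinv μ - γ) / (ψinv lam - γ)

/-- `κ(s) = 1 - (ψ^{-1}(ψ((ψ^{-1}(λ)-ψ^{-1}(μ))(1-s) + ψ^{-1}(μ)) - μ) - γ)/(ψ^{-1}(λ) - γ)`. -/
noncomputable def kappaML (ψ ψinv : ℝ → ℝ) (γ μ lam : ℝ) (s : ℝ) : ℝ :=
  1 - (ψinv (ψ ((ψinv lam - ψinv μ) * (1 - s) + ψinv μ) - μ) - γ) / (ψinv lam - γ)

/-- For a branching mechanism `ψ` strictly increasing on `[γ,∞)` (`γ` its largest root) with
`ψ(c) → ∞`, and `0 ≤ μ ≤ λ` with `λ > 0`: for every `s ∈ [0,1]`, `κ(s) ∈ [0,1]` and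
`φ_{0,λ}(κ(s)) - κ(s) = φ_{0,λ}(sg) - sg - (φ_{0,λ}(g) - g)`. -/
theorem kappa_identity (ψ : ℝ → ℝ) (hψ : IsBranchingMechanism ψ) (γ : ℝ)
    (hγ0 : 0 ≤ γ) (hγroot : ψ γ = 0) (hγlargest : ∀ c : ℝ, 0 ≤ c → ψ c ≤ 0 → c ≤ γ)
    (hmono : StrictMonoOn ψ (Set.Ici γ))
    (htop : Filter.Tendsto ψ Filter.atTop Filter.atTop)
    (ψinv : ℝ → ℝ) (hinv₁ : ∀ y : ℝ, 0 ≤ y → γ ≤ ψinv y ∧ ψ (ψinv y) = y)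
    (hinv₂ : ∀ c : ℝ, γ ≤ c → ψinv (ψ c) = c)
    (μ lam : ℝ) (hμ : 0 ≤ μ) (hml : μ ≤ lam) (hlam : 0 < lam) :
    ∀ s ∈ Set.Icc (0 : ℝ) 1,
      kappaML ψ ψinv γ μ lam s ∈ Set.Icc (0 : ℝ) 1 ∧
      phi0L ψ ψinv γ lam (kappaML ψ ψinv γ μ lam s) - kappaML ψ ψinv γ μ lam s
        = phi0L ψ ψinv γ lam (s * gML ψinv γ μ lam) - s * gML ψinv γ μ lam
          - (phi0L ψ ψinv γ lam (gML ψinv γ μ lam) - gML ψinv γ μ lam) := by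
  intro s hs
  obtain ⟨hs0, hs1⟩ := hs
  obtain ⟨hqγ, hψq⟩ := hinv₁ lam hlam.le
  obtain ⟨hmγ, hψm⟩ := hinv₁ μ hμ
  set q := ψinv lam with hq
  set m := ψinv μ with hm
  have hqγ' : γ < q := by
    rcases lt_or_eq_of_le hqγ with h | h
    · exact h
    · exfalso; rw [← h, hγroot] at hψq; linarith
  have hmq : m ≤ q := by
    by_contra h
    push_neg at h
    have := hmono (Set.mem_Ici.mpr hqγ) (Set.mem_Ici.mpr hmγ) h
    rw [hψq, hψm] at this; linarith
  set c := (q - m) * (1 - s) + m with hc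
  have hcm : m ≤ c := by nlinarith
  have hcq : c ≤ q := by nlinarith
  have hcγ : γ ≤ c := le_trans hmγ hcm
  have hψcμ : μ ≤ ψ c := by
    rcases eq_or_lt_of_le hcm with h | h
    · rw [← h, hψm]
    · refine le_of_lt ?_
      rw [← hψm]
      exact hmono (Set.mem_Ici.mpr hmγ) (Set.mem_Ici.mpr hcγ) h
  have hψclam : ψ c ≤ lam := by
    rcases eq_or_lt_of_le hcq with h | h
    · rw [h, hψq]
    · refine le_of_lt ?_
      rw [← hψq]
      exact hmono (Set.mem_Ici.mpr hcγ) (Set.mem_Ici.mpr hqγ) h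
  have h0 : (0:ℝ) ≤ ψ c - μ := by linarith
  obtain ⟨hXγ, hψX⟩ := hinv₁ (ψ c - μ) h0
  set X := ψinv (ψ c - μ) with hX
  have hXq : X ≤ q := by
    by_contra h
    push_neg at h
    have := hmono (Set.mem_Ici.mpr hqγ) (Set.mem_Ici.mpr hXγ) h
    rw [hψq, hψX] at this; linarith
  have hqm : (0:ℝ) < q - γ := by linarith
  have hqm' : q - γ ≠ 0 := ne_of_gt hqm
  have hκ : kappaML ψ ψinv γ μ lam s = 1 - (X - γ) / (q - γ) := rfl
  refine ⟨⟨?_, ?_⟩, ?_⟩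
  · rw [hκ, sub_nonneg, div_le_one hqm]; linarith
  · rw [hκ]
    have : 0 ≤ (X - γ) / (q - γ) := div_nonneg (by linarith) hqm.le
    linarith
  · have hgq : q - gML ψinv γ μ lam * (q - γ) = m := by
      simp only [gML, ← hq, ← hm]; field_simp; ring
    have hsg : q - s * gML ψinv γ μ lam * (q - γ) = c := by
      simp only [gML, ← hq, ← hm, hc]; field_simp; ring
    have hκq : q - kappaML ψ ψinv γ μ lam s * (q - γ) = X := by
      rw [hκ]; field_simp; ring
    simp only [phi0L, ← hq]
    rw [hκq, hsg, hgq, hψX, hψm]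
    ring
end
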